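/- arXiv:2512.14624 — 4 statements merged into one kernel-verified Lean document; each statement's English description precedes it below -/
import Mathlib

section
/- In the setting of the dyadic quantile grid for a continuous log-concave density f₀ (u_j := 2^{j−1} for j ≤ 0, u_j := 1 − 2^{−(j+1)} for j ≥ 1, a_j := F₀⁻¹(u_j)), for every j ∈ ℤ: 2^{−(|j|+3)}/f₀(a_j) ≤ a_{j+1} − a_j ≤ min{ 2^{−|j|}/f₀(a_j), 2^{−|j+1|}/f₀(a_{j+1}) } ≤ 2 / max{|ψ₀(a_j)|, |ψ₀(a_{j+1})|}, where ψ₀ is the score function of f₀. -/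
set_option maxHeartbeats 1000000


open MeasureTheory Real

/-- The dyadic grid of quantile levels: `u_j = 2^{j−1}` for `j ≤ 0` and
`u_j = 1 − 2^{−(j+1)}` for `j ≥ 1`. -/
noncomputable def uGrid (j : ℤ) : ℝ := if j ≤ 0 then (2:ℝ) ^ (j - 1) else 1 - (2:ℝ) ^ (-(j + 1))

open Set Filter in
private lemma lc_prod {f₀ : ℝ → ℝ} (hf_nonneg : ∀ x, 0 ≤ f₀ x)
    (hlogconc : ∀ x y : ℝ, ∀ t ∈ Set.Icc (0:ℝ) 1,
      f₀ x ^ t * f₀ y ^ (1 - t) ≤ f₀ (t * x + (1 - t) * y))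
    {p q r : ℝ} (hpr : p ≤ r) (hrq : r ≤ q) :
    f₀ p * f₀ q ≤ f₀ r * f₀ (p + q - r) := by
  rcases eq_or_lt_of_le (hpr.trans hrq) with h | h
  · have hr : r = p := le_antisymm (h ▸ hrq) hpr
    have hq : q = p := h.symm
    subst hr; subst hq
    simp
  · have hqp : (0:ℝ) < q - p := sub_pos.2 h
    set s : ℝ := (q - r) / (q - p) with hs_def
    have hs0 : 0 ≤ s := div_nonneg (by linarith) hqp.le
    have hs1 : s ≤ 1 := (div_le_one hqp).2 (by linarith)
    have e0 : s * (q - p) = q - r := div_mul_cancel₀ _ hqp.ne'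
    have e1 : s * p + (1 - s) * q = r := by nlinarith [e0]
    have e2 : (1 - s) * p + (1 - (1 - s)) * q = p + q - r := by nlinarith [e0]
    have h1 := hlogconc p q s ⟨hs0, hs1⟩
    have h2 := hlogconc p q (1 - s) ⟨by linarith, by linarith⟩
    rw [e1] at h1
    rw [e2] at h2
    have ep : f₀ p ^ s * f₀ p ^ (1 - s) = f₀ p := by
      rw [← Real.rpow_add' (hf_nonneg p) (by norm_num)]
      norm_num
    have eq' : f₀ q ^ (1 - s) * f₀ q ^ (1 - (1 - s)) = f₀ q := by
      rw [← Real.rpow_add' (hf_nonneg q) (by norm_num)]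
      norm_num
    have key : (f₀ p ^ s * f₀ q ^ (1 - s)) * (f₀ p ^ (1 - s) * f₀ q ^ (1 - (1 - s)))
        = f₀ p * f₀ q := by
      rw [mul_mul_mul_comm, ep, eq']
    calc f₀ p * f₀ q
        = (f₀ p ^ s * f₀ q ^ (1 - s)) * (f₀ p ^ (1 - s) * f₀ q ^ (1 - (1 - s))) := key.symm
      _ ≤ f₀ r * f₀ (p + q - r) := by
          apply mul_le_mul h1 h2 _ (hf_nonneg r)
          exact mul_nonneg (Real.rpow_nonneg (hf_nonneg p) _) (Real.rpow_nonneg (hf_nonneg q) _)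

private lemma uGrid_numeric (j : ℤ) :
    0 < uGrid j ∧ uGrid j < 1 ∧ uGrid j < uGrid (j+1) ∧
    (2:ℝ)^(-(|j|+3)) ≤ (uGrid (j+1) - uGrid j) * uGrid j / uGrid (j+1) ∧
    (uGrid (j+1) - uGrid j) * (1 - uGrid j) / (1 - uGrid (j+1)) ≤ (2:ℝ)^(-|j|) ∧
    (uGrid (j+1) - uGrid j) * uGrid (j+1) / uGrid j ≤ (2:ℝ)^(-|j+1|) ∧
    min (uGrid j) (1 - uGrid j) = (2:ℝ)^(-|j|-1) := by
  have h2ne : (2:ℝ) ≠ 0 := by norm_num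
  rcases lt_trichotomy j 0 with hj | hj | hj
  · -- j ≤ -1
    have habs : |j| = -j := abs_of_neg hj
    have habs1 : |j+1| = -(j+1) := abs_of_nonpos (by omega)
    have g1 : uGrid j = (2:ℝ)^(j-1) := by unfold uGrid; rw [if_pos (by omega)]
    have g2 : uGrid (j+1) = (2:ℝ)^(j+1-1) := by unfold uGrid; rw [if_pos (by omega)]
    set t : ℝ := (2:ℝ)^(j-1) with hts
    have ht0 : (0:ℝ) < t := zpow_pos (by norm_num) _
    have ht4 : t ≤ 1/4 := by
      calc t ≤ (2:ℝ)^(-2 : ℤ) := zpow_le_zpow_right₀ (by norm_num) (by omega)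
        _ = 1/4 := by norm_num
    have e1 : (2:ℝ)^(j+1-1) = 2 * t := by
      rw [hts, show j + 1 - 1 = (j-1) + 1 by ring, zpow_add_one₀ h2ne]; ring
    have e2 : (2:ℝ)^(-(-j+3)) = t / 4 := by
      rw [hts, show j - 1 = (-(-j+3)) + 2 by ring, zpow_add₀ h2ne]
      norm_num
    have e3 : (2:ℝ)^(-(-j)) = 2 * t := by
      rw [hts, show -(-j) = (j - 1) + 1 by ring, zpow_add_one₀ h2ne]; ring
    have e4 : (2:ℝ)^(-(-(j+1))) = 4 * t := by
      rw [hts, show -(-(j+1)) = (j-1) + 2 by ring, zpow_add₀ h2ne]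
      norm_num
      ring
    have e5 : (2:ℝ)^(-(-j)-1) = t := by rw [hts, show -(-j)-1 = j - 1 by ring]
    rw [g1, g2, habs, habs1, e1, e2, e3, e4, e5]
    refine ⟨ht0, by linarith, by linarith, ?_, ?_, ?_, ?_⟩
    · rw [le_div_iff₀ (by linarith)]; nlinarith
    · rw [div_le_iff₀ (by linarith)]; nlinarith
    · rw [div_le_iff₀ ht0]; nlinarith
    · rw [min_eq_left (by linarith)]
  · subst hj
    have g1 : uGrid 0 = (2:ℝ)^(-1:ℤ) := by unfold uGrid; norm_num
    have g2 : uGrid (0+1) = 1 - (2:ℝ)^(-2:ℤ) := by unfold uGrid; norm_num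
    rw [g1, g2]
    norm_num
  · -- j ≥ 1
    have habs : |j| = j := abs_of_pos hj
    have habs1 : |j+1| = j+1 := abs_of_pos (by omega)
    have g1 : uGrid j = 1 - (2:ℝ)^(-(j+1)) := by unfold uGrid; rw [if_neg (by omega)]
    have g2 : uGrid (j+1) = 1 - (2:ℝ)^(-(j+2)) := by
      unfold uGrid; rw [if_neg (by omega), show -(j+1+1) = -(j+2) by ring]
    set s : ℝ := (2:ℝ)^(-(j+2)) with hss
    have hs0 : (0:ℝ) < s := zpow_pos (by norm_num) _
    have hs8 : s ≤ 1/8 := by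
      calc s ≤ (2:ℝ)^(-3 : ℤ) := zpow_le_zpow_right₀ (by norm_num) (by omega)
        _ = 1/8 := by norm_num
    have e0 : (2:ℝ)^(-(j+1)) = 2 * s := by
      rw [hss, show -(j+1) = -(j+2) + 1 by ring, zpow_add_one₀ h2ne]; ring
    have e2 : (2:ℝ)^(-(j+3)) = s / 2 := by
      rw [hss, show -(j+2) = -(j+3) + 1 by ring, zpow_add_one₀ h2ne]; ring
    have e3 : (2:ℝ)^(-j) = 4 * s := by
      rw [hss, show -j = -(j+2) + 2 by ring, zpow_add₀ h2ne]
      norm_num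
      ring
    rw [g1, g2, habs, habs1, e0, e2, e3]
    refine ⟨by linarith, by linarith, by linarith, ?_, ?_, ?_, ?_⟩
    · rw [le_div_iff₀ (by linarith)]; nlinarith
    · rw [div_le_iff₀ (by linarith)]; nlinarith
    · rw [div_le_iff₀ (by linarith)]; nlinarith
    · rw [show (1:ℝ) - (1 - 2*s) = 2*s by ring, min_eq_right (by linarith),
        show (-j-1 : ℤ) = -(j+1) by ring, e0]

/-- Sharp two-sided bounds for the gaps of the dyadic quantile grid `a_j = F₀⁻¹(u_j)` of a
continuous log-concave density with score `ψ₀`: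
`2^{−(|j|+3)}/f₀(a_j) ≤ a_{j+1} − a_j ≤ min{2^{−|j|}/f₀(a_j), 2^{−|j+1|}/f₀(a_{j+1})}`
and `max{|ψ₀(a_j)|, |ψ₀(a_{j+1})|} · min{…} ≤ 2` (i.e. the min is at most
`2/max{|ψ₀(a_j)|, |ψ₀(a_{j+1})|}`). -/
theorem dyadic_quantile_gap_bounds
    (f₀ : ℝ → ℝ) (hcont : Continuous f₀)
    (hf_nonneg : ∀ x, 0 ≤ f₀ x) (hf_int : Integrable f₀ volume) (hf_mass : ∫ x, f₀ x = 1)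
    (hlogconc : ∀ x y : ℝ, ∀ t ∈ Set.Icc (0:ℝ) 1,
      f₀ x ^ t * f₀ y ^ (1 - t) ≤ f₀ (t * x + (1 - t) * y))
    (Finv : ℝ → ℝ) (hFinv : ∀ u ∈ Set.Ioo (0:ℝ) 1, (∫ t in Set.Iic (Finv u), f₀ t) = u)
    (ψ₀ : ℝ → ℝ)
    (hψ : ∀ x : ℝ, 0 < f₀ x →
      HasDerivWithinAt (fun t => Real.log (f₀ t)) (ψ₀ x) (Set.Ici x) x)
    : ∀ j : ℤ,
      (2:ℝ) ^ (-(|j| + 3)) / f₀ (Finv (uGrid j)) ≤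
        Finv (uGrid (j + 1)) - Finv (uGrid j) ∧
      Finv (uGrid (j + 1)) - Finv (uGrid j) ≤
        min ((2:ℝ) ^ (-|j|) / f₀ (Finv (uGrid j)))
          ((2:ℝ) ^ (-|j + 1|) / f₀ (Finv (uGrid (j + 1)))) ∧
      max |ψ₀ (Finv (uGrid j))| |ψ₀ (Finv (uGrid (j + 1)))| *
        min ((2:ℝ) ^ (-|j|) / f₀ (Finv (uGrid j)))
          ((2:ℝ) ^ (-|j + 1|) / f₀ (Finv (uGrid (j + 1)))) ≤ 2 := by
  classical
  open Set Filter in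
  -- basic abbreviations and facts
  have hlc : ∀ p q r : ℝ, p ≤ r → r ≤ q → f₀ p * f₀ q ≤ f₀ r * f₀ (p + q - r) :=
    fun p q r hpr hrq => lc_prod hf_nonneg hlogconc hpr hrq
  set F : ℝ → ℝ := fun y => ∫ t in Set.Iic y, f₀ t with hFdef
  have hFmono : Monotone F := by
    intro y z hyz
    exact setIntegral_mono_set hf_int.integrableOn
      (Filter.Eventually.of_forall hf_nonneg) ((Set.Iic_subset_Iic.2 hyz).eventuallyLE)
  have hFtail : ∀ y : ℝ, (∫ t in Set.Ioi y, f₀ t) = 1 - F y := by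
    intro y
    have h := intervalIntegral.integral_Iic_add_Ioi (b := y) hf_int.integrableOn hf_int.integrableOn
    rw [hf_mass] at h
    simp only [hFdef]
    linarith
  -- translation invariance for Iic and Ioi integrals
  have htrIic : ∀ y c : ℝ, (∫ t in Set.Iic y, f₀ (t + c)) = ∫ t in Set.Iic (y + c), f₀ t := by
    intro y c
    have h := (measurePreserving_add_right volume c).setIntegral_preimage_emb
      (Homeomorph.addRight c).isClosedEmbedding.measurableEmbedding f₀ (Set.Iic (y + c))
    simpa [Set.preimage_add_const_Iic] using h
  have htrIoi : ∀ y c : ℝ, (∫ t in Set.Ioi y, f₀ (t + c)) = ∫ t in Set.Ioi (y + c), f₀ t := by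
    intro y c
    have h := (measurePreserving_add_right volume c).setIntegral_preimage_emb
      (Homeomorph.addRight c).isClosedEmbedding.measurableEmbedding f₀ (Set.Ioi (y + c))
    simpa [Set.preimage_add_const_Ioi] using h
  have htr_int : ∀ c : ℝ, Integrable (fun t => f₀ (t + c)) volume := by
    intro c
    have h := ((measurePreserving_add_right volume c).integrable_comp_emb
      (Homeomorph.addRight c).isClosedEmbedding.measurableEmbedding (g := f₀)).2 hf_int
    exact h
  -- L1 : reversed hazard rate monotonicity
  have hL1 : ∀ y b : ℝ, y ≤ b → F y * f₀ b ≤ f₀ y * F b := by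
    intro y b hyb
    have step : (∫ t in Set.Iic y, f₀ t * f₀ b) ≤ ∫ t in Set.Iic y, f₀ y * f₀ (t + (b - y)) := by
      refine setIntegral_mono_on (hf_int.integrableOn.mul_const _)
        (((htr_int (b - y)).const_mul _).integrableOn) measurableSet_Iic ?_
      intro t ht
      have h := hlc t b y ht hyb
      calc f₀ t * f₀ b ≤ f₀ y * f₀ (t + b - y) := h
        _ = f₀ y * f₀ (t + (b - y)) := by rw [add_sub_assoc]
    calc F y * f₀ b = ∫ t in Set.Iic y, f₀ t * f₀ b := by
          simp only [hFdef]; rw [integral_mul_const]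
      _ ≤ ∫ t in Set.Iic y, f₀ y * f₀ (t + (b - y)) := step
      _ = f₀ y * ∫ t in Set.Iic y, f₀ (t + (b - y)) := by rw [integral_const_mul]
      _ = f₀ y * F b := by rw [htrIic y (b - y)]; simp [hFdef]
  -- L2 : hazard rate monotonicity
  have hL2 : ∀ a y : ℝ, a ≤ y → (1 - F y) * f₀ a ≤ f₀ y * (1 - F a) := by
    intro a y hay
    have step : (∫ t in Set.Ioi y, f₀ t * f₀ a) ≤ ∫ t in Set.Ioi y, f₀ y * f₀ (t + (a - y)) := by
      refine setIntegral_mono_on (hf_int.integrableOn.mul_const _)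
        (((htr_int (a - y)).const_mul _).integrableOn) measurableSet_Ioi ?_
      intro t ht
      have h := hlc a t y hay (le_of_lt ht)
      calc f₀ t * f₀ a = f₀ a * f₀ t := mul_comm _ _
        _ ≤ f₀ y * f₀ (a + t - y) := h
        _ = f₀ y * f₀ (t + (a - y)) := by rw [show a + t - y = t + (a - y) by ring]
    calc (1 - F y) * f₀ a = ∫ t in Set.Ioi y, f₀ t * f₀ a := by
          rw [integral_mul_const, hFtail]
      _ ≤ ∫ t in Set.Ioi y, f₀ y * f₀ (t + (a - y)) := step
      _ = f₀ y * ∫ t in Set.Ioi y, f₀ (t + (a - y)) := by rw [integral_const_mul]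
      _ = f₀ y * (1 - F a) := by rw [htrIoi y (a - y), show y + (a - y) = a by ring, hFtail]
  -- positivity of the density at interior quantiles
  have hfpos : ∀ a : ℝ, 0 < F a → F a < 1 → 0 < f₀ a := by
    intro a h0 h1
    by_contra hcon
    push_neg at hcon
    have ha : f₀ a = 0 := le_antisymm hcon (hf_nonneg a)
    have hexL : ∃ p ∈ Set.Iic a, 0 < f₀ p := by
      by_contra hL
      push_neg at hL
      have hz : Set.EqOn f₀ (fun _ => (0:ℝ)) (Set.Iic a) := by
        intro t ht; exact le_antisymm (hL t ht) (hf_nonneg t)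
      have : F a = 0 := by
        simp only [hFdef]
        rw [setIntegral_congr_fun measurableSet_Iic hz]
        simp
      linarith
    have hexR : ∃ q ∈ Set.Ioi a, 0 < f₀ q := by
      by_contra hR
      push_neg at hR
      have hz : Set.EqOn f₀ (fun _ => (0:ℝ)) (Set.Ioi a) := by
        intro t ht; exact le_antisymm (hR t ht) (hf_nonneg t)
      have : (∫ t in Set.Ioi a, f₀ t) = 0 := by
        rw [setIntegral_congr_fun measurableSet_Ioi hz]
        simp
      rw [hFtail] at this
      linarith
    obtain ⟨p, hp, hfp⟩ := hexL
    obtain ⟨q, hq, hfq⟩ := hexR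
    have h := hlc p q a hp (le_of_lt hq)
    rw [ha] at h
    nlinarith [hf_nonneg (p + q - a)]
  -- fundamental theorem of calculus for F
  have hFderiv : ∀ a : ℝ, HasDerivAt F (f₀ a) a := by
    intro a
    have h1 : F = fun y => (∫ t in Set.Iic 0, f₀ t) + ∫ t in (0:ℝ)..y, f₀ t := by
      funext y
      have := intervalIntegral.integral_Iic_sub_Iic (μ := volume) (f := f₀) (a := (0:ℝ)) (b := y)
        hf_int.integrableOn hf_int.integrableOn
      simp only [hFdef]
      linarith
    rw [h1]
    exact (intervalIntegral.integral_hasDerivAt_right hf_int.intervalIntegrable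
      (hcont.stronglyMeasurable.stronglyMeasurableAtFilter)
      hcont.continuousAt).const_add _
  -- score bounds at interior quantiles
  have hpsi : ∀ a : ℝ, 0 < F a → F a < 1 → |ψ₀ a| ≤ f₀ a / min (F a) (1 - F a) := by
    intro a h0 h1
    have hfa : 0 < f₀ a := hfpos a h0 h1
    have hfa' : ∀ᶠ y in nhds a, 0 < f₀ y :=
      hcont.continuousAt.preimage_mem_nhds (Ioi_mem_nhds hfa)
    have hF1' : ∀ᶠ y in nhds a, F y < 1 :=
      (hFderiv a).continuousAt.preimage_mem_nhds (Iio_mem_nhds h1)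
    have hslope_f : Filter.Tendsto (slope (fun t => Real.log (f₀ t)) a)
        (nhdsWithin a (Set.Ioi a)) (nhds (ψ₀ a)) := by
      have h := (hasDerivWithinAt_iff_tendsto_slope).1 (hψ a hfa)
      rwa [Set.Ici_sdiff_left] at h
    have hlogF : HasDerivAt (fun y => Real.log (F y)) (f₀ a / F a) a :=
      (hFderiv a).log h0.ne'
    have hslope_F : Filter.Tendsto (slope (fun y => Real.log (F y)) a)
        (nhdsWithin a (Set.Ioi a)) (nhds (f₀ a / F a)) := by
      have h := (hasDerivWithinAt_iff_tendsto_slope).1 (hlogF.hasDerivWithinAt (s := Set.Ioi a))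
      rwa [Set.diff_singleton_eq_self (by simp)] at h
    have hlogG : HasDerivAt (fun y => Real.log (1 - F y)) (-(f₀ a) / (1 - F a)) a :=
      ((hFderiv a).const_sub 1).log (by linarith : (0:ℝ) < 1 - F a).ne'
    have hslope_G : Filter.Tendsto (slope (fun y => Real.log (1 - F y)) a)
        (nhdsWithin a (Set.Ioi a)) (nhds (-(f₀ a) / (1 - F a))) := by
      have h := (hasDerivWithinAt_iff_tendsto_slope).1 (hlogG.hasDerivWithinAt (s := Set.Ioi a))
      rwa [Set.diff_singleton_eq_self (by simp)] at h
    have hub : ψ₀ a ≤ f₀ a / F a := by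
      refine le_of_tendsto_of_tendsto hslope_f hslope_F ?_
      filter_upwards [hfa'.filter_mono nhdsWithin_le_nhds, self_mem_nhdsWithin]
        with y hy hya
      have hya' : a < y := hya
      have hFy : 0 < F y := lt_of_lt_of_le h0 (hFmono hya'.le)
      have key : F a * f₀ y ≤ f₀ a * F y := hL1 a y hya'.le
      rw [slope_def_field, slope_def_field]
      have hden : (0:ℝ) < y - a := sub_pos.2 hya'
      rw [div_le_div_iff₀ hden hden]
      have h2 : Real.log (F a) + Real.log (f₀ y) ≤ Real.log (f₀ a) + Real.log (F y) := by
        rw [← Real.log_mul h0.ne' hy.ne', ← Real.log_mul hfa.ne' hFy.ne']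
        exact Real.log_le_log (mul_pos h0 hy) key
      nlinarith [h2]
    have hlb : -(f₀ a) / (1 - F a) ≤ ψ₀ a := by
      refine le_of_tendsto_of_tendsto hslope_G hslope_f ?_
      filter_upwards [hfa'.filter_mono nhdsWithin_le_nhds,
        hF1'.filter_mono nhdsWithin_le_nhds, self_mem_nhdsWithin] with y hy hy1 hya
      have hya' : a < y := hya
      have key : (1 - F y) * f₀ a ≤ f₀ y * (1 - F a) := hL2 a y hya'.le
      rw [slope_def_field, slope_def_field]
      have hden : (0:ℝ) < y - a := sub_pos.2 hya'
      rw [div_le_div_iff₀ hden hden]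
      have h2 : Real.log (1 - F y) + Real.log (f₀ a) ≤
          Real.log (f₀ y) + Real.log (1 - F a) := by
        rw [← Real.log_mul (by linarith : (0:ℝ) < 1 - F y).ne' hfa.ne',
          ← Real.log_mul hy.ne' (by linarith : (0:ℝ) < 1 - F a).ne']
        exact Real.log_le_log (mul_pos (by linarith) hfa) key
      nlinarith [h2]
    have hmin0 : 0 < min (F a) (1 - F a) := lt_min h0 (by linarith)
    refine abs_le.2 ⟨?_, ?_⟩
    · have h3 : f₀ a / (1 - F a) ≤ f₀ a / min (F a) (1 - F a) := by
        gcongr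
        exact min_le_right _ _
      rw [neg_div] at hlb
      linarith
    · refine hub.trans ?_
      gcongr
      exact min_le_left _ _
  -- main per-index argument
  intro j
  obtain ⟨hu0, hu1, huv, hn1, hn2, hn3, hminu⟩ := uGrid_numeric j
  obtain ⟨hv0, hv1, -, -, -, -, hminv⟩ := uGrid_numeric (j+1)
  set u : ℝ := uGrid j with hu
  set v : ℝ := uGrid (j+1) with hv
  set a : ℝ := Finv u with hadef
  set b : ℝ := Finv v with hbdef
  have hFa : F a = u := hFinv u ⟨hu0, hu1⟩
  have hFb : F b = v := hFinv v ⟨hv0, hv1⟩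
  have hfa : 0 < f₀ a := hfpos a (by rw [hFa]; exact hu0) (by rw [hFa]; exact hu1)
  have hfb : 0 < f₀ b := hfpos b (by rw [hFb]; exact hv0) (by rw [hFb]; exact hv1)
  have hab : a < b := by
    by_contra h
    push_neg at h
    have := hFmono h
    rw [hFa, hFb] at this
    linarith
  have hsub : v - u = ∫ t in Set.Ioc a b, f₀ t := by
    have h := intervalIntegral.integral_Iic_sub_Iic (μ := volume) (f := f₀) (a := a) (b := b)
      hf_int.integrableOn hf_int.integrableOn
    rw [intervalIntegral.integral_of_le hab.le] at h
    rw [← hFa, ← hFb]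
    simpa [hFdef] using h
  have hIoc_const : ∀ c : ℝ, (∫ _t in Set.Ioc a b, c) = (b - a) * c := by
    intro c
    rw [setIntegral_const, Real.volume_real_Ioc_of_le hab.le]
    simp [smul_eq_mul]
  have hIoc_int_const : ∀ c : ℝ, IntegrableOn (fun _ => c) (Set.Ioc a b) volume := by
    intro c
    exact integrableOn_const measure_Ioc_lt_top.ne
  -- lower bound on the gap
  have hup : ∀ t ∈ Set.Ioc a b, f₀ t * u ≤ f₀ a * v := by
    intro t ht
    have h1 := hL1 a t ht.1.le
    rw [hFa] at h1
    have h2 : F t ≤ v := by rw [← hFb]; exact hFmono ht.2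
    nlinarith [mul_le_mul_of_nonneg_left h2 hfa.le]
  have hint1 : (v - u) * u ≤ (b - a) * (f₀ a * v) := by
    have h := setIntegral_mono_on (hf_int.integrableOn.mul_const u)
      (hIoc_int_const (f₀ a * v)) measurableSet_Ioc hup
    rw [integral_mul_const, ← hsub, hIoc_const] at h
    exact h
  have hgap1 : (v - u) * u / (v * f₀ a) ≤ b - a := by
    rw [div_le_iff₀ (mul_pos hv0 hfa)]
    linarith [hint1]
  have claim1 : (2:ℝ) ^ (-(|j| + 3)) / f₀ a ≤ b - a := by
    refine le_trans ?_ hgap1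
    rw [show (v - u) * u / (v * f₀ a) = ((v - u) * u / v) / f₀ a by rw [div_div]]
    gcongr
  -- upper bound via f₀ a
  have hlow2 : ∀ t ∈ Set.Ioc a b, f₀ a * (1 - v) ≤ f₀ t * (1 - u) := by
    intro t ht
    have h1 := hL2 a t ht.1.le
    rw [hFa] at h1
    have h2 : F t ≤ v := by rw [← hFb]; exact hFmono ht.2
    nlinarith [mul_le_mul_of_nonneg_right (show (1:ℝ) - v ≤ 1 - F t by linarith) hfa.le]
  have hint2 : (b - a) * (f₀ a * (1 - v)) ≤ (v - u) * (1 - u) := by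
    have h := setIntegral_mono_on (hIoc_int_const (f₀ a * (1 - v)))
      (hf_int.integrableOn.mul_const (1 - u)) measurableSet_Ioc hlow2
    rw [hIoc_const, integral_mul_const, ← hsub] at h
    exact h
  have claim2a : b - a ≤ (2:ℝ) ^ (-|j|) / f₀ a := by
    have hgap2 : b - a ≤ (v - u) * (1 - u) / ((1 - v) * f₀ a) := by
      rw [le_div_iff₀ (mul_pos (by linarith : (0:ℝ) < 1 - v) hfa)]
      linarith [hint2]
    refine hgap2.trans ?_
    rw [show (v - u) * (1 - u) / ((1 - v) * f₀ a) = ((v - u) * (1 - u) / (1 - v)) / f₀ a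
      by rw [div_div]]
    gcongr
  -- upper bound via f₀ b
  have hlow3 : ∀ t ∈ Set.Ioc a b, f₀ b * u ≤ f₀ t * v := by
    intro t ht
    have h1 := hL1 t b ht.2
    rw [hFb] at h1
    have h2 : u ≤ F t := by rw [← hFa]; exact hFmono ht.1.le
    nlinarith [mul_le_mul_of_nonneg_right h2 hfb.le]
  have hint3 : (b - a) * (f₀ b * u) ≤ (v - u) * v := by
    have h := setIntegral_mono_on (hIoc_int_const (f₀ b * u))
      (hf_int.integrableOn.mul_const v) measurableSet_Ioc hlow3
    rw [hIoc_const, integral_mul_const, ← hsub] at h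
    exact h
  have claim2b : b - a ≤ (2:ℝ) ^ (-|j + 1|) / f₀ b := by
    have hgap3 : b - a ≤ (v - u) * v / (u * f₀ b) := by
      rw [le_div_iff₀ (mul_pos hu0 hfb)]
      linarith [hint3]
    refine hgap3.trans ?_
    rw [show (v - u) * v / (u * f₀ b) = ((v - u) * v / u) / f₀ b by rw [div_div]]
    gcongr
  -- score bounds
  have hpa := hpsi a (by rw [hFa]; exact hu0) (by rw [hFa]; exact hu1)
  rw [hFa, hminu] at hpa
  have hpb := hpsi b (by rw [hFb]; exact hv0) (by rw [hFb]; exact hv1)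
  rw [hFb, hminv] at hpb
  have hc1 : (0:ℝ) < (2:ℝ) ^ (-|j| - 1) := zpow_pos (by norm_num) _
  have hc2 : (0:ℝ) < (2:ℝ) ^ (-|j + 1| - 1) := zpow_pos (by norm_num) _
  have hA : |ψ₀ a| * ((2:ℝ) ^ (-|j|) / f₀ a) ≤ 2 := by
    have h1 : |ψ₀ a| * ((2:ℝ) ^ (-|j|) / f₀ a) ≤
        (f₀ a / (2:ℝ) ^ (-|j| - 1)) * ((2:ℝ) ^ (-|j|) / f₀ a) :=
      mul_le_mul_of_nonneg_right hpa (by positivity)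
    have e : (2:ℝ) ^ (-|j|) = 2 * (2:ℝ) ^ (-|j| - 1) := by
      conv_lhs => rw [show -|j| = (-|j| - 1) + 1 by ring]
      rw [zpow_add_one₀ (by norm_num : (2:ℝ) ≠ 0)]
      ring
    have h2 : (f₀ a / (2:ℝ) ^ (-|j| - 1)) * ((2:ℝ) ^ (-|j|) / f₀ a) = 2 := by
      rw [e]
      field_simp
    linarith
  have hB : |ψ₀ b| * ((2:ℝ) ^ (-|j + 1|) / f₀ b) ≤ 2 := by
    have h1 : |ψ₀ b| * ((2:ℝ) ^ (-|j + 1|) / f₀ b) ≤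
        (f₀ b / (2:ℝ) ^ (-|j + 1| - 1)) * ((2:ℝ) ^ (-|j + 1|) / f₀ b) :=
      mul_le_mul_of_nonneg_right hpb (by positivity)
    have e : (2:ℝ) ^ (-|j + 1|) = 2 * (2:ℝ) ^ (-|j + 1| - 1) := by
      conv_lhs => rw [show -|j + 1| = (-|j + 1| - 1) + 1 by ring]
      rw [zpow_add_one₀ (by norm_num : (2:ℝ) ≠ 0)]
      ring
    have h2 : (f₀ b / (2:ℝ) ^ (-|j + 1| - 1)) * ((2:ℝ) ^ (-|j + 1|) / f₀ b) = 2 := by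
      rw [e]
      field_simp
    linarith
  refine ⟨claim1, le_min claim2a claim2b, ?_⟩
  rcases le_total (|ψ₀ a|) (|ψ₀ b|) with h | h
  · rw [max_eq_right h]
    calc |ψ₀ b| * min ((2:ℝ) ^ (-|j|) / f₀ a) ((2:ℝ) ^ (-|j + 1|) / f₀ b)
        ≤ |ψ₀ b| * ((2:ℝ) ^ (-|j + 1|) / f₀ b) :=
          mul_le_mul_of_nonneg_left (min_le_right _ _) (abs_nonneg _)
      _ ≤ 2 := hB
  · rw [max_eq_left h]
    calc |ψ₀ a| * min ((2:ℝ) ^ (-|j|) / f₀ a) ((2:ℝ) ^ (-|j + 1|) / f₀ b)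
        ≤ |ψ₀ a| * ((2:ℝ) ^ (-|j|) / f₀ a) :=
          mul_le_mul_of_nonneg_left (min_le_left _ _) (abs_nonneg _)
      _ ≤ 2 := hA
end

section
/- Let f₀ be a continuous log-concave density on ℝ with density quantile function J₀ and its a.e. derivative J₀' = ψ₀ ∘ F₀⁻¹ (decreasing). With u_ℓ := 2^{ℓ−1} for ℓ ≤ 0 and u_ℓ := 1 − 2^{−(ℓ+1)} for ℓ ≥ 1, the Fisher information i(f₀) := ∫ ψ₀² f₀ satisfies i(f₀) ≥ (1/8)·∑_{ℓ∈ℤ} 2^{−|ℓ|}·J₀'(u_ℓ)². -/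
open MeasureTheory Real

open Set Filter


section Aux
variable {f₀ ψ₀ : ℝ → ℝ}

theorem aux_pos_between
    (hlogconc : ∀ x y : ℝ, ∀ t ∈ Set.Icc (0:ℝ) 1,
      f₀ x ^ t * f₀ y ^ (1 - t) ≤ f₀ (t * x + (1 - t) * y))
    {a z b : ℝ} (haz : a ≤ z) (hzb : z ≤ b)
    (ha : 0 < f₀ a) (hb : 0 < f₀ b) : 0 < f₀ z := by
  rcases eq_or_lt_of_le haz with rfl | haz
  · exact ha
  rcases eq_or_lt_of_le hzb with rfl | hzb
  · exact hb
  have hab : a < b := haz.trans hzb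
  set t : ℝ := (b - z) / (b - a) with ht
  have ht0 : 0 < t := div_pos (by linarith) (by linarith)
  have ht1 : t < 1 := (div_lt_one (by linarith)).2 (by linarith)
  have hmem : t ∈ Set.Icc (0:ℝ) 1 := ⟨ht0.le, ht1.le⟩
  have key := hlogconc a b t hmem
  have hz : t * a + (1 - t) * b = z := by
    have hne : b - a ≠ 0 := sub_ne_zero.mpr hab.ne'
    rw [ht, div_mul_eq_mul_div, one_sub_div hne, div_mul_eq_mul_div, ← add_div,
      div_eq_iff hne]
    ring
  rw [hz] at key
  have : 0 < f₀ a ^ t * f₀ b ^ (1 - t) :=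
    mul_pos (Real.rpow_pos_of_pos ha t) (Real.rpow_pos_of_pos hb (1 - t))
  linarith

theorem aux_concave
    (hlogconc : ∀ x y : ℝ, ∀ t ∈ Set.Icc (0:ℝ) 1,
      f₀ x ^ t * f₀ y ^ (1 - t) ≤ f₀ (t * x + (1 - t) * y))
    {p q : ℝ} (hp : 0 < f₀ p) (hq : 0 < f₀ q) :
    ConcaveOn ℝ (Set.Icc p q) (fun t => Real.log (f₀ t)) := by
  refine ⟨convex_Icc p q, fun x hx y hy a b ha hb hab => ?_⟩
  have hpq : p ≤ q := by
    by_contra h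
    exact (Set.Icc_eq_empty h).subset hx
  have hfx : 0 < f₀ x := aux_pos_between hlogconc hx.1 hx.2 hp hq
  have hfy : 0 < f₀ y := aux_pos_between hlogconc hy.1 hy.2 hp hq
  have key := hlogconc x y a ⟨ha, by linarith⟩
  have h1 : (1 : ℝ) - a = b := by linarith
  rw [h1] at key
  have hmid : 0 < f₀ x ^ a * f₀ y ^ b :=
    mul_pos (Real.rpow_pos_of_pos hfx a) (Real.rpow_pos_of_pos hfy b)
  have := Real.log_le_log hmid key
  rw [Real.log_mul (Real.rpow_pos_of_pos hfx a).ne' (Real.rpow_pos_of_pos hfy b).ne',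
    Real.log_rpow hfx, Real.log_rpow hfy] at this
  simpa [smul_eq_mul] using this

end Aux

section Aux2
variable {f₀ ψ₀ : ℝ → ℝ}

theorem aux_deriv_ge_slope
    (hlogconc : ∀ x y : ℝ, ∀ t ∈ Set.Icc (0:ℝ) 1,
      f₀ x ^ t * f₀ y ^ (1 - t) ≤ f₀ (t * x + (1 - t) * y))
    (hψ : ∀ x : ℝ, 0 < f₀ x →
      HasDerivWithinAt (fun t => Real.log (f₀ t)) (ψ₀ x) (Set.Ici x) x)
    {a b : ℝ} (hab : a < b) (ha : 0 < f₀ a) (hb : 0 < f₀ b) :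
    (Real.log (f₀ b) - Real.log (f₀ a)) / (b - a) ≤ ψ₀ a := by
  have hconc := aux_concave hlogconc ha hb
  have hder := hψ a ha
  rw [hasDerivWithinAt_iff_tendsto_slope, Set.Ici_sdiff_left] at hder
  refine ge_of_tendsto hder ?_
  filter_upwards [Ioo_mem_nhdsGT_of_mem (Set.mem_Ico.2 ⟨le_refl a, hab⟩)] with z hz
  have hza : (0:ℝ) < z - a := by linarith [hz.1]
  have hba : (0:ℝ) < b - a := by linarith
  have h2 := hconc.neg.secant_mono_aux2 (Set.left_mem_Icc.2 hab.le)
    (Set.right_mem_Icc.2 hab.le) hz.1 hz.2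
  simp only [Pi.neg_apply] at h2
  rw [div_le_div_iff₀ hza hba] at h2
  rw [slope_def_field, div_le_div_iff₀ hba hza]
  nlinarith [h2]

theorem aux_deriv_le_slope
    (hlogconc : ∀ x y : ℝ, ∀ t ∈ Set.Icc (0:ℝ) 1,
      f₀ x ^ t * f₀ y ^ (1 - t) ≤ f₀ (t * x + (1 - t) * y))
    (hψ : ∀ x : ℝ, 0 < f₀ x →
      HasDerivWithinAt (fun t => Real.log (f₀ t)) (ψ₀ x) (Set.Ici x) x)
    {a b c : ℝ} (hab : a < b) (hbc : b < c) (ha : 0 < f₀ a) (hc : 0 < f₀ c) :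
    ψ₀ b ≤ (Real.log (f₀ b) - Real.log (f₀ a)) / (b - a) := by
  have hb : 0 < f₀ b := aux_pos_between hlogconc hab.le hbc.le ha hc
  have hconc := aux_concave hlogconc ha hc
  have hder := hψ b hb
  rw [hasDerivWithinAt_iff_tendsto_slope, Set.Ici_sdiff_left] at hder
  refine le_of_tendsto hder ?_
  filter_upwards [Ioo_mem_nhdsGT_of_mem (Set.mem_Ico.2 ⟨le_refl b, hbc⟩)] with z hz
  have hmema : a ∈ Set.Icc a c := Set.left_mem_Icc.2 (by linarith)
  have hmemz : z ∈ Set.Icc a c := ⟨by linarith [hz.1], (hz.2).le⟩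
  have h2 := hconc.slope_anti_adjacent hmema hmemz hab hz.1
  rw [slope_def_field]
  exact h2.trans_eq rfl

theorem aux_anti
    (hlogconc : ∀ x y : ℝ, ∀ t ∈ Set.Icc (0:ℝ) 1,
      f₀ x ^ t * f₀ y ^ (1 - t) ≤ f₀ (t * x + (1 - t) * y))
    (hψ : ∀ x : ℝ, 0 < f₀ x →
      HasDerivWithinAt (fun t => Real.log (f₀ t)) (ψ₀ x) (Set.Ici x) x)
    {x y c : ℝ} (hxy : x < y) (hyc : y < c) (hx : 0 < f₀ x) (hc : 0 < f₀ c) :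
    ψ₀ y ≤ ψ₀ x := by
  have hy : 0 < f₀ y := aux_pos_between hlogconc hxy.le hyc.le hx hc
  exact (aux_deriv_le_slope hlogconc hψ hxy hyc hx hc).trans
    (aux_deriv_ge_slope hlogconc hψ hxy hx hy)

end Aux2


lemma two_zpow_pos (k : ℤ) : (0:ℝ) < (2:ℝ)^k := zpow_pos (by norm_num) k

lemma two_zpow_mono {a b : ℤ} (h : a ≤ b) : (2:ℝ)^a ≤ (2:ℝ)^b :=
  zpow_le_zpow_right₀ one_le_two h

lemma uGrid_pos (j : ℤ) : 0 < uGrid j := by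
  unfold uGrid
  split_ifs with h
  · exact two_zpow_pos _
  · have h3 : (2:ℝ)^(-(j+1)) ≤ 1/4 :=
      (two_zpow_mono (by omega : -(j+1) ≤ -2)).trans_eq (by norm_num)
    linarith

lemma uGrid_lt_one (j : ℤ) : uGrid j < 1 := by
  unfold uGrid
  split_ifs with h
  · have h3 : (2:ℝ)^(j-1) ≤ 1/2 :=
      (two_zpow_mono (by omega : j - 1 ≤ -1)).trans_eq (by norm_num)
    linarith
  · have := two_zpow_pos (-(j+1))
    linarith

lemma uGrid_mem (j : ℤ) : uGrid j ∈ Set.Ioo (0:ℝ) 1 := ⟨uGrid_pos j, uGrid_lt_one j⟩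

lemma gap_ge (j : ℤ) : (1/4:ℝ) * (2:ℝ)^(-|j|) ≤ uGrid j - uGrid (j-1) := by
  unfold uGrid
  rcases le_or_gt j 0 with h0 | h0
  · rw [if_pos h0, if_pos (by omega : j - 1 ≤ 0), abs_of_nonpos h0, neg_neg]
    have e1 : (2:ℝ)^(j-1) = (2:ℝ)^j * 2⁻¹ := zpow_sub_one₀ two_ne_zero j
    have e2 : (2:ℝ)^(j-1-1) = (2:ℝ)^(j-1) * 2⁻¹ := zpow_sub_one₀ two_ne_zero (j-1)
    have hp : (0:ℝ) < (2:ℝ)^j := two_zpow_pos j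
    rw [e2, e1]
    linarith
  · rw [if_neg (by omega), abs_of_nonneg (by omega : (0:ℤ) ≤ j)]
    by_cases h1 : j = 1
    · subst h1; norm_num
    · rw [if_neg (by omega : ¬ j - 1 ≤ 0), show j - 1 + 1 = j by ring]
      have e1 : (2:ℝ)^(-(j+1)) = (2:ℝ)^(-j) * 2⁻¹ := by
        rw [show -(j+1) = -j - 1 by ring]; exact zpow_sub_one₀ two_ne_zero (-j)
      have hp : (0:ℝ) < (2:ℝ)^(-j) := two_zpow_pos (-j)
      rw [e1]
      linarith

lemma gap_ge' (j : ℤ) : (1/4:ℝ) * (2:ℝ)^(-|j|) ≤ uGrid (j+1) - uGrid j := by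
  unfold uGrid
  rcases le_or_gt j (-1) with h0 | h0
  · rw [if_pos (by omega : j + 1 ≤ 0), if_pos (by omega : j ≤ 0),
      abs_of_nonpos (by omega : j ≤ 0), neg_neg, show j + 1 - 1 = j by ring]
    have e1 : (2:ℝ)^(j-1) = (2:ℝ)^j * 2⁻¹ := zpow_sub_one₀ two_ne_zero j
    have hp : (0:ℝ) < (2:ℝ)^j := two_zpow_pos j
    rw [e1]
    linarith
  · by_cases h1 : j = 0
    · subst h1; norm_num
    · rw [if_neg (by omega : ¬ j + 1 ≤ 0), if_neg (by omega : ¬ j ≤ 0),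
        abs_of_nonneg (by omega : (0:ℤ) ≤ j)]
      have e1 : (2:ℝ)^(-(j+1)) = (2:ℝ)^(-j) * 2⁻¹ := by
        rw [show -(j+1) = -j - 1 by ring]; exact zpow_sub_one₀ two_ne_zero (-j)
      have e2 : (2:ℝ)^(-(j+1+1)) = (2:ℝ)^(-(j+1)) * 2⁻¹ := by
        rw [show -(j+1+1) = -(j+1) - 1 by ring]; exact zpow_sub_one₀ two_ne_zero (-(j+1))
      have hp : (0:ℝ) < (2:ℝ)^(-j) := two_zpow_pos (-j)
      rw [e2, e1]
      linarith

lemma gap_le (j : ℤ) : uGrid j - uGrid (j-1) ≤ (2:ℝ)^(-|j|) := by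
  unfold uGrid
  rcases le_or_gt j 0 with h0 | h0
  · rw [if_pos h0, if_pos (by omega : j - 1 ≤ 0), abs_of_nonpos h0, neg_neg]
    have e1 : (2:ℝ)^(j-1) = (2:ℝ)^j * 2⁻¹ := zpow_sub_one₀ two_ne_zero j
    have e2 : (2:ℝ)^(j-1-1) = (2:ℝ)^(j-1) * 2⁻¹ := zpow_sub_one₀ two_ne_zero (j-1)
    have hp : (0:ℝ) < (2:ℝ)^j := two_zpow_pos j
    rw [e2, e1]
    linarith
  · rw [if_neg (by omega), abs_of_nonneg (by omega : (0:ℤ) ≤ j)]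
    by_cases h1 : j = 1
    · subst h1; norm_num
    · rw [if_neg (by omega : ¬ j - 1 ≤ 0), show j - 1 + 1 = j by ring]
      have e1 : (2:ℝ)^(-(j+1)) = (2:ℝ)^(-j) * 2⁻¹ := by
        rw [show -(j+1) = -j - 1 by ring]; exact zpow_sub_one₀ two_ne_zero (-j)
      have hp : (0:ℝ) < (2:ℝ)^(-j) := two_zpow_pos (-j)
      rw [e1]
      linarith

lemma gap_le' (j : ℤ) : uGrid j - uGrid (j-1) ≤ (2:ℝ)^(-|j-1|) := by
  rcases le_or_gt j 0 with h0 | h0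
  · unfold uGrid
    rw [if_pos h0, if_pos (by omega : j - 1 ≤ 0), abs_of_nonpos (by omega : j - 1 ≤ 0), neg_neg]
    have e1 : (2:ℝ)^(j-1) = (2:ℝ)^j * 2⁻¹ := zpow_sub_one₀ two_ne_zero j
    have e2 : (2:ℝ)^(j-1-1) = (2:ℝ)^(j-1) * 2⁻¹ := zpow_sub_one₀ two_ne_zero (j-1)
    have hp : (0:ℝ) < (2:ℝ)^j := two_zpow_pos j
    rw [e2, e1]
    linarith
  · refine (gap_le j).trans (two_zpow_mono ?_)
    rw [abs_of_nonneg (by omega : (0:ℤ) ≤ j), abs_of_nonneg (by omega : (0:ℤ) ≤ j - 1)]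
    omega

lemma gap_pos (j : ℤ) : 0 < uGrid j - uGrid (j-1) :=
  lt_of_lt_of_le (by positivity) (gap_ge j)

section Aux4
variable {f₀ ψ₀ : ℝ → ℝ}

/-- lower bound for the lintegral of `ψ₀² f₀` over an interval -/
theorem aux_lower (hf_nonneg : ∀ x, 0 ≤ f₀ x) (hf_int : Integrable f₀ volume)
    {a b d m : ℝ} (hm : (∫ x in Set.Ioc a b, f₀ x) = m)
    (hd : ∀ y ∈ Set.Ioc a b, d^2 ≤ (ψ₀ y)^2) :
    ENNReal.ofReal (m * d^2) ≤ ∫⁻ x in Set.Ioc a b, ENNReal.ofReal ((ψ₀ x)^2 * f₀ x) := by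
  have hint : IntegrableOn (fun x => d^2 * f₀ x) (Set.Ioc a b) volume :=
    (hf_int.integrableOn).const_mul _
  have hnn : 0 ≤ᵐ[volume.restrict (Set.Ioc a b)] fun x => d^2 * f₀ x :=
    Filter.Eventually.of_forall fun x => mul_nonneg (sq_nonneg d) (hf_nonneg x)
  have e1 : ENNReal.ofReal (m * d^2) = ∫⁻ x in Set.Ioc a b, ENNReal.ofReal (d^2 * f₀ x) := by
    rw [← ofReal_integral_eq_lintegral_ofReal hint hnn, integral_const_mul, hm, mul_comm]
  rw [e1]
  refine lintegral_mono_ae ?_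
  filter_upwards [ae_restrict_mem measurableSet_Ioc] with y hy
  exact ENNReal.ofReal_le_ofReal (mul_le_mul_of_nonneg_right (hd y hy) (hf_nonneg y))

/-- upper bound for the lintegral of `ψ₀² f₀` over an interval -/
theorem aux_upper (hf_nonneg : ∀ x, 0 ≤ f₀ x) (hf_int : Integrable f₀ volume)
    {a b d m : ℝ} (hm : (∫ x in Set.Ioc a b, f₀ x) = m)
    (hd : ∀ y ∈ Set.Ioc a b, (ψ₀ y)^2 ≤ d) :
    (∫⁻ x in Set.Ioc a b, ENNReal.ofReal ((ψ₀ x)^2 * f₀ x)) ≤ ENNReal.ofReal (m * d) := by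
  have hint : IntegrableOn (fun x => d * f₀ x) (Set.Ioc a b) volume :=
    (hf_int.integrableOn).const_mul _
  have hnn : 0 ≤ᵐ[volume.restrict (Set.Ioc a b)] fun x => d * f₀ x := by
    filter_upwards [ae_restrict_mem measurableSet_Ioc] with y hy
    have h0 : 0 ≤ (ψ₀ y)^2 := sq_nonneg _
    exact mul_nonneg ((h0.trans (hd y hy))) (hf_nonneg y)
  have e1 : ENNReal.ofReal (m * d) = ∫⁻ x in Set.Ioc a b, ENNReal.ofReal (d * f₀ x) := by
    rw [← ofReal_integral_eq_lintegral_ofReal hint hnn, integral_const_mul, hm, mul_comm]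
  rw [e1]
  refine lintegral_mono_ae ?_
  filter_upwards [ae_restrict_mem measurableSet_Ioc] with y hy
  exact ENNReal.ofReal_le_ofReal (mul_le_mul_of_nonneg_right (hd y hy) (hf_nonneg y))

end Aux4


/-- Fisher information lower bound via the dyadic quantile grid: for a continuous
log-concave density `f₀` with score `ψ₀` and `J₀' = ψ₀ ∘ F₀⁻¹`,
`i(f₀) = ∫ ψ₀² f₀ ≥ (1/8) ∑_{ℓ ∈ ℤ} 2^{−|ℓ|} J₀'(u_ℓ)²`. -/
theorem fisher_information_dyadic_sum_bound
    (f₀ : ℝ → ℝ) (hcont : Continuous f₀)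
    (hf_nonneg : ∀ x, 0 ≤ f₀ x) (hf_int : Integrable f₀ volume) (hf_mass : ∫ x, f₀ x = 1)
    (hlogconc : ∀ x y : ℝ, ∀ t ∈ Set.Icc (0:ℝ) 1,
      f₀ x ^ t * f₀ y ^ (1 - t) ≤ f₀ (t * x + (1 - t) * y))
    (Finv : ℝ → ℝ) (hFinv : ∀ u ∈ Set.Ioo (0:ℝ) 1, (∫ t in Set.Iic (Finv u), f₀ t) = u)
    (ψ₀ : ℝ → ℝ)
    (hψ : ∀ x : ℝ, 0 < f₀ x →
      HasDerivWithinAt (fun t => Real.log (f₀ t)) (ψ₀ x) (Set.Ici x) x)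
    : (1/8 : ℝ) * ∑' ℓ : ℤ, (2:ℝ) ^ (-|ℓ|) * (ψ₀ (Finv (uGrid ℓ)))^2 ≤
        ∫ x, (ψ₀ x)^2 * f₀ x := by
  classical
  -- abbreviations (as plain functions, for readability we use `X`, `F` etc.)
  have hf_ae : 0 ≤ᵐ[volume] f₀ := Filter.Eventually.of_forall hf_nonneg
  set F : ℝ → ℝ := fun x => ∫ t in Set.Iic x, f₀ t with hFdef
  have hFX : ∀ ℓ : ℤ, F (Finv (uGrid ℓ)) = uGrid ℓ := fun ℓ => hFinv _ (uGrid_mem ℓ)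
  have hFmono : Monotone F := fun a b hab =>
    setIntegral_mono_set hf_int.integrableOn (ae_restrict_of_ae hf_ae)
      (HasSubset.Subset.eventuallyLE (Set.Iic_subset_Iic.2 hab))
  have hF_le_one : ∀ x, F x ≤ 1 := fun x =>
    (setIntegral_le_integral hf_int hf_ae).trans_eq hf_mass
  have hF_nonneg : ∀ x, 0 ≤ F x := fun x =>
    setIntegral_nonneg measurableSet_Iic fun t _ => hf_nonneg t
  -- difference of F over an interval
  have hFdiff : ∀ a b : ℝ, a ≤ b → (∫ x in Set.Ioc a b, f₀ x) = F b - F a := by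
    intro a b hab
    have h1 : (∫ x in (Set.Iic a ∪ Set.Ioc a b), f₀ x) =
        (∫ x in Set.Iic a, f₀ x) + ∫ x in Set.Ioc a b, f₀ x :=
      setIntegral_union (Set.Iic_disjoint_Ioc (le_refl a)) measurableSet_Ioc
        hf_int.integrableOn hf_int.integrableOn
    rw [Set.Iic_union_Ioc_eq_Iic hab] at h1
    simp only [hFdef]
    linarith [h1]
  -- integral over Ioi
  have hIoi : ∀ y : ℝ, (∫ t in Set.Ioi y, f₀ t) = 1 - F y := by
    intro y
    have h1 := integral_add_compl (measurableSet_Iic (a := y)) hf_int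
    rw [Set.compl_Iic, hf_mass] at h1
    linarith [h1]
  -- existence of positivity points
  have hEright : ∀ y : ℝ, F y < 1 → ∃ b, y < b ∧ 0 < f₀ b := by
    intro y hy
    by_contra hcon
    push_neg at hcon
    have hzero : Set.EqOn f₀ (fun _ => (0:ℝ)) (Set.Ioi y) := fun b hb =>
      le_antisymm (hcon b hb) (hf_nonneg b)
    have h0 : (∫ t in Set.Ioi y, f₀ t) = 0 := by
      rw [setIntegral_congr_fun measurableSet_Ioi hzero]
      simp
    rw [hIoi y] at h0
    linarith
  have hEleft : ∀ y : ℝ, 0 < F y → ∃ a, a ≤ y ∧ 0 < f₀ a := by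
    intro y hy
    by_contra hcon
    push_neg at hcon
    have hzero : Set.EqOn f₀ (fun _ => (0:ℝ)) (Set.Iic y) := fun b hb =>
      le_antisymm (hcon b hb) (hf_nonneg b)
    have h0 : F y = 0 := by
      simp only [hFdef]
      rw [setIntegral_congr_fun measurableSet_Iic hzero]
      simp
    linarith
  -- positivity at grid points
  have hpos : ∀ ℓ : ℤ, 0 < f₀ (Finv (uGrid ℓ)) := by
    intro ℓ
    obtain ⟨a, ha1, ha2⟩ := hEleft _ ((hFX ℓ) ▸ uGrid_pos ℓ)
    obtain ⟨b, hb1, hb2⟩ := hEright _ ((hFX ℓ) ▸ uGrid_lt_one ℓ)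
    exact aux_pos_between hlogconc ha1 hb1.le ha2 hb2
  -- grid points are strictly increasing
  have hXlt : ∀ ℓ : ℤ, Finv (uGrid (ℓ-1)) < Finv (uGrid ℓ) := by
    intro ℓ
    by_contra hcon
    push_neg at hcon
    have := hFmono hcon
    rw [hFX, hFX] at this
    linarith [gap_pos ℓ]
  have hXmono : Monotone fun ℓ : ℤ => Finv (uGrid ℓ) := by
    refine (strictMono_int_of_lt_succ fun n => ?_).monotone
    have := hXlt (n+1)
    simpa using this
  -- the intervals K ℓ and the lintegrals P ℓ
  set P : ℤ → ENNReal := fun j => ∫⁻ x in Set.Ioc (Finv (uGrid (j-1))) (Finv (uGrid j)),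
    ENNReal.ofReal ((ψ₀ x)^2 * f₀ x) with hPdef
  -- pairwise disjointness
  have hKdisj : Pairwise (Function.onFun Disjoint
      fun ℓ : ℤ => Set.Ioc (Finv (uGrid (ℓ-1))) (Finv (uGrid ℓ))) := by
    have key : ∀ i j : ℤ, i < j → Disjoint (Set.Ioc (Finv (uGrid (i-1))) (Finv (uGrid i)))
        (Set.Ioc (Finv (uGrid (j-1))) (Finv (uGrid j))) := by
      intro i j hij
      refine Set.Ioc_disjoint_Ioc.2 ?_
      have h1 : Finv (uGrid i) ≤ Finv (uGrid (j-1)) := hXmono (by omega : i ≤ j - 1)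
      calc min (Finv (uGrid i)) (Finv (uGrid j)) ≤ Finv (uGrid i) := min_le_left _ _
        _ ≤ Finv (uGrid (j-1)) := h1
        _ ≤ max (Finv (uGrid (i-1))) (Finv (uGrid (j-1))) := le_max_right _ _
    intro i j hij
    rcases lt_or_gt_of_ne hij with h | h
    · exact key i j h
    · exact (key j i h).symm
  -- mass of each interval
  have hmass : ∀ ℓ : ℤ, (∫ x in Set.Ioc (Finv (uGrid (ℓ-1))) (Finv (uGrid ℓ)), f₀ x)
      = uGrid ℓ - uGrid (ℓ-1) := by
    intro ℓ
    rw [hFdiff _ _ (hXlt ℓ).le, hFX, hFX]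
  -- pointwise bounds on each interval
  have hlow : ∀ ℓ : ℤ, ∀ y ∈ Set.Ioc (Finv (uGrid (ℓ-1))) (Finv (uGrid ℓ)),
      ψ₀ (Finv (uGrid ℓ)) ≤ ψ₀ y := by
    intro ℓ y hy
    rcases eq_or_lt_of_le hy.2 with heq | hlt
    · rw [heq]
    · have hy_pos : 0 < f₀ y :=
        aux_pos_between hlogconc hy.1.le hy.2 (hpos (ℓ-1)) (hpos ℓ)
      obtain ⟨b, hb1, hb2⟩ := hEright (Finv (uGrid ℓ)) (by rw [hFX]; exact uGrid_lt_one ℓ)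
      exact aux_anti hlogconc hψ hlt hb1 hy_pos hb2
  have hup : ∀ ℓ : ℤ, ∀ y ∈ Set.Ioc (Finv (uGrid (ℓ-1))) (Finv (uGrid ℓ)),
      ψ₀ y ≤ ψ₀ (Finv (uGrid (ℓ-1))) := by
    intro ℓ y hy
    have hFy : F y < 1 := by
      have h1 : F y ≤ F (Finv (uGrid ℓ)) := hFmono hy.2
      rw [hFX] at h1
      exact lt_of_le_of_lt h1 (uGrid_lt_one ℓ)
    obtain ⟨b, hb1, hb2⟩ := hEright y hFy
    exact aux_anti hlogconc hψ hy.1 hb1 (hpos (ℓ-1)) hb2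
  -- per-interval lower bound for the dyadic sum terms
  have hPlow : ∀ ℓ : ℤ, ENNReal.ofReal ((2:ℝ)^(-|ℓ|) * (ψ₀ (Finv (uGrid ℓ)))^2) ≤
      4 * (P ℓ + P (ℓ+1)) := by
    intro ℓ
    by_cases hc : 0 ≤ ψ₀ (Finv (uGrid ℓ))
    · have hd : ∀ y ∈ Set.Ioc (Finv (uGrid (ℓ-1))) (Finv (uGrid ℓ)),
          (ψ₀ (Finv (uGrid ℓ)))^2 ≤ (ψ₀ y)^2 := fun y hy =>
        pow_le_pow_left₀ hc (hlow ℓ y hy) 2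
      have base := aux_lower hf_nonneg hf_int (hmass ℓ) hd
      have h1 : (2:ℝ)^(-|ℓ|) * (ψ₀ (Finv (uGrid ℓ)))^2 ≤
          4 * ((uGrid ℓ - uGrid (ℓ-1)) * (ψ₀ (Finv (uGrid ℓ)))^2) := by
        nlinarith [gap_ge ℓ, sq_nonneg (ψ₀ (Finv (uGrid ℓ)))]
      calc ENNReal.ofReal ((2:ℝ)^(-|ℓ|) * (ψ₀ (Finv (uGrid ℓ)))^2)
          ≤ ENNReal.ofReal (4 * ((uGrid ℓ - uGrid (ℓ-1)) * (ψ₀ (Finv (uGrid ℓ)))^2)) :=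
            ENNReal.ofReal_le_ofReal h1
        _ = 4 * ENNReal.ofReal ((uGrid ℓ - uGrid (ℓ-1)) * (ψ₀ (Finv (uGrid ℓ)))^2) := by
            rw [ENNReal.ofReal_mul (by norm_num : (0:ℝ) ≤ 4)]
            norm_num
        _ ≤ 4 * P ℓ := mul_le_mul_right base 4
        _ ≤ 4 * (P ℓ + P (ℓ+1)) := mul_le_mul_right le_self_add 4
    · push_neg at hc
      have hd : ∀ y ∈ Set.Ioc (Finv (uGrid (ℓ+1-1))) (Finv (uGrid (ℓ+1))),
          (ψ₀ (Finv (uGrid ℓ)))^2 ≤ (ψ₀ y)^2 := by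
        intro y hy
        have h2 : ψ₀ y ≤ ψ₀ (Finv (uGrid (ℓ+1-1))) := hup (ℓ+1) y hy
        rw [show ℓ+1-1 = ℓ from by ring] at h2
        nlinarith [h2, hc]
      have base := aux_lower hf_nonneg hf_int (hmass (ℓ+1)) hd
      have h1 : (2:ℝ)^(-|ℓ|) * (ψ₀ (Finv (uGrid ℓ)))^2 ≤
          4 * ((uGrid (ℓ+1) - uGrid (ℓ+1-1)) * (ψ₀ (Finv (uGrid ℓ)))^2) := by
        rw [show ℓ+1-1 = ℓ from by ring]
        nlinarith [gap_ge' ℓ, sq_nonneg (ψ₀ (Finv (uGrid ℓ)))]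
      calc ENNReal.ofReal ((2:ℝ)^(-|ℓ|) * (ψ₀ (Finv (uGrid ℓ)))^2)
          ≤ ENNReal.ofReal (4 * ((uGrid (ℓ+1) - uGrid (ℓ+1-1)) * (ψ₀ (Finv (uGrid ℓ)))^2)) :=
            ENNReal.ofReal_le_ofReal h1
        _ = 4 * ENNReal.ofReal ((uGrid (ℓ+1) - uGrid (ℓ+1-1)) * (ψ₀ (Finv (uGrid ℓ)))^2) := by
            rw [ENNReal.ofReal_mul (by norm_num : (0:ℝ) ≤ 4)]
            norm_num
        _ ≤ 4 * P (ℓ+1) := mul_le_mul_right base 4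
        _ ≤ 4 * (P ℓ + P (ℓ+1)) := mul_le_mul_right le_add_self 4
  -- per-interval upper bound
  have hPup : ∀ ℓ : ℤ, P ℓ ≤ ENNReal.ofReal ((2:ℝ)^(-|ℓ|) * (ψ₀ (Finv (uGrid ℓ)))^2)
      + ENNReal.ofReal ((2:ℝ)^(-|ℓ-1|) * (ψ₀ (Finv (uGrid (ℓ-1))))^2) := by
    intro ℓ
    have hd : ∀ y ∈ Set.Ioc (Finv (uGrid (ℓ-1))) (Finv (uGrid ℓ)),
        (ψ₀ y)^2 ≤ (ψ₀ (Finv (uGrid ℓ)))^2 + (ψ₀ (Finv (uGrid (ℓ-1))))^2 := by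
      intro y hy
      rcases le_or_gt 0 (ψ₀ y) with h0 | h0
      · have h2 : (ψ₀ y)^2 ≤ (ψ₀ (Finv (uGrid (ℓ-1))))^2 :=
          pow_le_pow_left₀ h0 (hup ℓ y hy) 2
        linarith [sq_nonneg (ψ₀ (Finv (uGrid ℓ)))]
      · have h2 : (-ψ₀ y)^2 ≤ (-ψ₀ (Finv (uGrid ℓ)))^2 :=
          pow_le_pow_left₀ (by linarith) (by linarith [hlow ℓ y hy]) 2
        simp only [neg_sq] at h2
        linarith [sq_nonneg (ψ₀ (Finv (uGrid (ℓ-1)))), h2]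
    have base := aux_upper hf_nonneg hf_int (hmass ℓ) hd
    refine base.trans ?_
    have h1 : (uGrid ℓ - uGrid (ℓ-1)) * ((ψ₀ (Finv (uGrid ℓ)))^2 + (ψ₀ (Finv (uGrid (ℓ-1))))^2)
        ≤ (2:ℝ)^(-|ℓ|) * (ψ₀ (Finv (uGrid ℓ)))^2 + (2:ℝ)^(-|ℓ-1|) * (ψ₀ (Finv (uGrid (ℓ-1))))^2 := by
      nlinarith [gap_le ℓ, gap_le' ℓ, sq_nonneg (ψ₀ (Finv (uGrid ℓ))),
        sq_nonneg (ψ₀ (Finv (uGrid (ℓ-1)))), gap_pos ℓ]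
    refine (ENNReal.ofReal_le_ofReal h1).trans (le_of_eq ?_)
    exact ENNReal.ofReal_add (by positivity) (by positivity)
  -- shift identities for tsums
  have hshift1 : (∑' ℓ : ℤ, P (ℓ+1)) = ∑' ℓ : ℤ, P ℓ := by
    simpa using (Equiv.addRight (1:ℤ)).tsum_eq P
  -- sum of P is at most the total lintegral
  have hSP : (∑' ℓ : ℤ, P ℓ) ≤ ∫⁻ x, ENNReal.ofReal ((ψ₀ x)^2 * f₀ x) := by
    have h1 := lintegral_iUnion (μ := volume) (fun ℓ : ℤ => measurableSet_Ioc) hKdisj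
      (fun x => ENNReal.ofReal ((ψ₀ x)^2 * f₀ x))
    calc (∑' ℓ : ℤ, P ℓ)
        = ∫⁻ x in ⋃ ℓ : ℤ, Set.Ioc (Finv (uGrid (ℓ-1))) (Finv (uGrid ℓ)),
            ENNReal.ofReal ((ψ₀ x)^2 * f₀ x) := h1.symm
      _ ≤ _ := setLIntegral_le_lintegral _ _
  have hA8L : (∑' ℓ : ℤ, ENNReal.ofReal ((2:ℝ)^(-|ℓ|) * (ψ₀ (Finv (uGrid ℓ)))^2)) ≤
      8 * ∫⁻ x, ENNReal.ofReal ((ψ₀ x)^2 * f₀ x) := by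
    calc (∑' ℓ : ℤ, ENNReal.ofReal ((2:ℝ)^(-|ℓ|) * (ψ₀ (Finv (uGrid ℓ)))^2))
        ≤ ∑' ℓ : ℤ, 4 * (P ℓ + P (ℓ+1)) := ENNReal.tsum_le_tsum hPlow
      _ = 4 * ((∑' ℓ : ℤ, P ℓ) + ∑' ℓ : ℤ, P (ℓ+1)) := by
          rw [ENNReal.tsum_mul_left, ENNReal.tsum_add]
      _ = 8 * ∑' ℓ : ℤ, P ℓ := by rw [hshift1]; ring
      _ ≤ 8 * ∫⁻ x, ENNReal.ofReal ((ψ₀ x)^2 * f₀ x) := mul_le_mul_right hSP 8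
  -- every point where f₀ is positive is covered by some interval
  have hcover : ∀ x : ℝ, 0 < f₀ x →
      ∃ ℓ : ℤ, x ∈ Set.Ioc (Finv (uGrid (ℓ-1))) (Finv (uGrid ℓ)) := by
    intro x hx
    obtain ⟨ε, hε, hball⟩ := Metric.mem_nhds_iff.1
      ((hcont.continuousAt (x := x)).preimage_mem_nhds (Ioi_mem_nhds hx))
    have hposIoc : ∀ a b : ℝ, a < b → (∀ z ∈ Set.Ioo a b, 0 < f₀ z) →
        0 < ∫ t in Set.Ioc a b, f₀ t := by
      intro a b hab hz
      have h2 := intervalIntegral.intervalIntegral_pos_of_pos_on (f := f₀) (a := a) (b := b)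
        hf_int.intervalIntegrable hz hab
      rwa [intervalIntegral.integral_of_le hab.le] at h2
    have hFxpos : 0 < F x := by
      have h1 : 0 < ∫ t in Set.Ioc (x - ε/2) x, f₀ t := by
        refine hposIoc _ _ (by linarith) fun z hz => hball ?_
        simp only [Metric.mem_ball, Real.dist_eq]
        rw [abs_lt]
        constructor <;> [linarith [hz.1]; linarith [hz.2]]
      rw [hFdiff _ _ (by linarith : x - ε/2 ≤ x)] at h1
      linarith [hF_nonneg (x - ε/2)]
    have hFxlt : F x < 1 := by
      have h1 : 0 < ∫ t in Set.Ioc x (x + ε/2), f₀ t := by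
        refine hposIoc _ _ (by linarith) fun z hz => hball ?_
        simp only [Metric.mem_ball, Real.dist_eq]
        rw [abs_lt]
        constructor <;> [linarith [hz.1]; linarith [hz.2]]
      rw [hFdiff _ _ (by linarith : x ≤ x + ε/2)] at h1
      linarith [hF_le_one (x + ε/2)]
    have hhalf : ∀ n : ℕ, ((1:ℝ)/2)^n = (2:ℝ)^(-(n:ℤ)) := by
      intro n
      rw [zpow_neg, ← zpow_natCast, one_div, inv_zpow]
    obtain ⟨k, hk⟩ := exists_pow_lt_of_lt_one (by linarith : (0:ℝ) < 1 - F x)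
      (by norm_num : (1/2:ℝ) < 1)
    have hupper : F x < uGrid ((k:ℤ)+1) := by
      have e : uGrid ((k:ℤ)+1) = 1 - (2:ℝ)^(-((k:ℤ)+2)) := by
        unfold uGrid
        rw [if_neg (by omega), show -((k:ℤ)+1+1) = -((k:ℤ)+2) from by ring]
      rw [e]
      have h2 : (2:ℝ)^(-((k:ℤ)+2)) ≤ (2:ℝ)^(-(k:ℤ)) := two_zpow_mono (by omega)
      rw [← hhalf k] at h2
      linarith
    have hxle : x ≤ Finv (uGrid ((k:ℤ)+1)) := by
      by_contra hcon2
      push_neg at hcon2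
      have h3 := hFmono hcon2.le
      rw [hFX] at h3
      linarith
    obtain ⟨k2, hk2⟩ := exists_pow_lt_of_lt_one hFxpos (by norm_num : (1/2:ℝ) < 1)
    have hlower : ∀ ℓ : ℤ, ℓ ≤ -(k2:ℤ) → uGrid ℓ < F x := by
      intro ℓ hℓ
      have h4 : uGrid ℓ ≤ (2:ℝ)^(-(k2:ℤ)) := by
        unfold uGrid
        rw [if_pos (by omega)]
        exact two_zpow_mono (by omega)
      rw [← hhalf k2] at h4
      linarith
    have hbdd : ∀ z : ℤ, x ≤ Finv (uGrid z) → -(k2:ℤ) ≤ z := by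
      intro z hz
      by_contra hcon2
      push_neg at hcon2
      have h1 : F x ≤ F (Finv (uGrid z)) := hFmono hz
      rw [hFX] at h1
      exact absurd h1 (not_le.2 (hlower z (by omega)))
    obtain ⟨ℓ₀, hmem, hleast⟩ := Int.exists_least_of_bdd
      (P := fun ℓ : ℤ => x ≤ Finv (uGrid ℓ)) ⟨-(k2:ℤ), hbdd⟩ ⟨(k:ℤ)+1, hxle⟩
    refine ⟨ℓ₀, ?_, hmem⟩
    by_contra hcon2
    push_neg at hcon2
    exact absurd (hleast (ℓ₀-1) hcon2) (by omega)
  -- the total lintegral is controlled by the dyadic sum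
  have hmeasU : MeasurableSet (⋃ ℓ : ℤ, Set.Ioc (Finv (uGrid (ℓ-1))) (Finv (uGrid ℓ))) :=
    MeasurableSet.iUnion fun ℓ => measurableSet_Ioc
  have hLP : (∫⁻ x, ENNReal.ofReal ((ψ₀ x)^2 * f₀ x)) ≤
      2 * ∑' ℓ : ℤ, ENNReal.ofReal ((2:ℝ)^(-|ℓ|) * (ψ₀ (Finv (uGrid ℓ)))^2) := by
    have hzero : (∫⁻ x in (⋃ ℓ : ℤ, Set.Ioc (Finv (uGrid (ℓ-1))) (Finv (uGrid ℓ)))ᶜ,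
        ENNReal.ofReal ((ψ₀ x)^2 * f₀ x)) = 0 := by
      have hcongr : ∀ᵐ x ∂(volume : Measure ℝ),
          x ∈ (⋃ ℓ : ℤ, Set.Ioc (Finv (uGrid (ℓ-1))) (Finv (uGrid ℓ)))ᶜ →
          ENNReal.ofReal ((ψ₀ x)^2 * f₀ x) = (0:ENNReal) := by
        refine Filter.Eventually.of_forall fun x hx => ?_
        have hf0 : f₀ x = 0 := by
          by_contra hne
          have hpos' : 0 < f₀ x := lt_of_le_of_ne (hf_nonneg x) (Ne.symm hne)
          obtain ⟨ℓ, hℓ⟩ := hcover x hpos'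
          exact hx (Set.mem_iUnion.2 ⟨ℓ, hℓ⟩)
        rw [hf0, mul_zero]
        simp
      rw [setLIntegral_congr_fun_ae hmeasU.compl hcongr]
      simp
    have hsplit := lintegral_add_compl (μ := volume)
      (fun x => ENNReal.ofReal ((ψ₀ x)^2 * f₀ x)) hmeasU
    have hU : (∫⁻ x in ⋃ ℓ : ℤ, Set.Ioc (Finv (uGrid (ℓ-1))) (Finv (uGrid ℓ)),
        ENNReal.ofReal ((ψ₀ x)^2 * f₀ x)) = ∑' ℓ : ℤ, P ℓ :=
      lintegral_iUnion (μ := volume) (fun ℓ : ℤ => measurableSet_Ioc) hKdisj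
        (fun x => ENNReal.ofReal ((ψ₀ x)^2 * f₀ x))
    have hshift2 : (∑' ℓ : ℤ, ENNReal.ofReal ((2:ℝ)^(-|ℓ-1|) * (ψ₀ (Finv (uGrid (ℓ-1))))^2))
        = ∑' ℓ : ℤ, ENNReal.ofReal ((2:ℝ)^(-|ℓ|) * (ψ₀ (Finv (uGrid ℓ)))^2) := by
      simpa using (Equiv.subRight (1:ℤ)).tsum_eq
        (fun j : ℤ => ENNReal.ofReal ((2:ℝ)^(-|j|) * (ψ₀ (Finv (uGrid j)))^2))
    calc (∫⁻ x, ENNReal.ofReal ((ψ₀ x)^2 * f₀ x)) = ∑' ℓ : ℤ, P ℓ := by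
          rw [← hsplit, hzero, add_zero, hU]
      _ ≤ ∑' ℓ : ℤ, (ENNReal.ofReal ((2:ℝ)^(-|ℓ|) * (ψ₀ (Finv (uGrid ℓ)))^2)
            + ENNReal.ofReal ((2:ℝ)^(-|ℓ-1|) * (ψ₀ (Finv (uGrid (ℓ-1))))^2)) :=
          ENNReal.tsum_le_tsum hPup
      _ = (∑' ℓ : ℤ, ENNReal.ofReal ((2:ℝ)^(-|ℓ|) * (ψ₀ (Finv (uGrid ℓ)))^2))
            + ∑' ℓ : ℤ, ENNReal.ofReal ((2:ℝ)^(-|ℓ-1|) * (ψ₀ (Finv (uGrid (ℓ-1))))^2) :=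
          ENNReal.tsum_add
      _ = 2 * ∑' ℓ : ℤ, ENNReal.ofReal ((2:ℝ)^(-|ℓ|) * (ψ₀ (Finv (uGrid ℓ)))^2) := by
          rw [hshift2]; ring
  -- measurability of the integrand
  have hSopen : IsOpen {x : ℝ | 0 < f₀ x} := isOpen_lt continuous_const hcont
  have hanti : AntitoneOn ψ₀ {x : ℝ | 0 < f₀ x} := by
    intro a ha b hb hab
    rcases eq_or_lt_of_le hab with rfl | hlt
    · exact le_refl _
    · obtain ⟨ε, hε, hball⟩ := Metric.mem_nhds_iff.1 (hSopen.mem_nhds hb)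
      have hc : 0 < f₀ (b + ε/2) := by
        have : b + ε/2 ∈ Metric.ball b ε := by
          simp only [Metric.mem_ball, Real.dist_eq]
          rw [abs_lt]
          constructor <;> linarith
        exact hball this
      exact aux_anti hlogconc hψ hlt (by linarith) ha hc
  have hmeas : AEMeasurable (fun x => (ψ₀ x)^2 * f₀ x) volume := by
    have h1 : AEMeasurable ψ₀ (volume.restrict {x : ℝ | 0 < f₀ x}) :=
      aemeasurable_restrict_of_antitoneOn hSopen.measurableSet hanti
    have h2 : AEMeasurable (fun x => (ψ₀ x)^2 * f₀ x) (volume.restrict {x : ℝ | 0 < f₀ x}) :=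
      (h1.pow_const 2).mul hcont.aemeasurable
    have h3 : (fun x => (ψ₀ x)^2 * f₀ x)
        = Set.indicator {x : ℝ | 0 < f₀ x} (fun x => (ψ₀ x)^2 * f₀ x) := by
      funext x
      by_cases hx : x ∈ {x : ℝ | 0 < f₀ x}
      · rw [Set.indicator_of_mem hx]
      · rw [Set.indicator_of_notMem hx]
        have h0 : f₀ x = 0 := le_antisymm (not_lt.1 hx) (hf_nonneg x)
        rw [h0, mul_zero]
    rw [h3]
    exact (aemeasurable_indicator_iff hSopen.measurableSet).2 h2
  -- conclusion
  by_cases hA : (∑' ℓ : ℤ, ENNReal.ofReal ((2:ℝ)^(-|ℓ|) * (ψ₀ (Finv (uGrid ℓ)))^2)) = ⊤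
  · have hnots : ¬ Summable (fun ℓ : ℤ => (2:ℝ)^(-|ℓ|) * (ψ₀ (Finv (uGrid ℓ)))^2) := by
      intro hs
      have h5 := ENNReal.ofReal_tsum_of_nonneg (fun ℓ => by positivity) hs
      rw [hA] at h5
      exact ENNReal.ofReal_ne_top h5
    rw [tsum_eq_zero_of_not_summable hnots, mul_zero]
    exact integral_nonneg fun x => mul_nonneg (sq_nonneg _) (hf_nonneg x)
  · have hLt : (∫⁻ x, ENNReal.ofReal ((ψ₀ x)^2 * f₀ x)) ≠ ⊤ :=
      ne_top_of_le_ne_top (ENNReal.mul_ne_top (by simp) hA) hLP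
    have hnn : 0 ≤ᵐ[(volume : Measure ℝ)] fun x => (ψ₀ x)^2 * f₀ x :=
      Filter.Eventually.of_forall fun x => mul_nonneg (sq_nonneg _) (hf_nonneg x)
    have hInt : (∫ x, (ψ₀ x)^2 * f₀ x)
        = (∫⁻ x, ENNReal.ofReal ((ψ₀ x)^2 * f₀ x)).toReal := by
      rw [integral_eq_lintegral_of_nonneg_ae hnn hmeas.aestronglyMeasurable]
    have htsum : (∑' ℓ : ℤ, (2:ℝ)^(-|ℓ|) * (ψ₀ (Finv (uGrid ℓ)))^2)
        = (∑' ℓ : ℤ, ENNReal.ofReal ((2:ℝ)^(-|ℓ|) * (ψ₀ (Finv (uGrid ℓ)))^2)).toReal := by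
      calc (∑' ℓ : ℤ, (2:ℝ)^(-|ℓ|) * (ψ₀ (Finv (uGrid ℓ)))^2)
          = ∑' ℓ : ℤ, (ENNReal.ofReal ((2:ℝ)^(-|ℓ|) * (ψ₀ (Finv (uGrid ℓ)))^2)).toReal :=
            tsum_congr fun ℓ => (ENNReal.toReal_ofReal (by positivity)).symm
        _ = _ := (ENNReal.tsum_toReal_eq fun ℓ => ENNReal.ofReal_ne_top).symm
    have hfinal : (∑' ℓ : ℤ, ENNReal.ofReal ((2:ℝ)^(-|ℓ|) * (ψ₀ (Finv (uGrid ℓ)))^2)).toReal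
        ≤ 8 * (∫⁻ x, ENNReal.ofReal ((ψ₀ x)^2 * f₀ x)).toReal := by
      have h8 : (8:ENNReal) * (∫⁻ x, ENNReal.ofReal ((ψ₀ x)^2 * f₀ x)) ≠ ⊤ :=
        ENNReal.mul_ne_top (by simp) hLt
      have h9 := ENNReal.toReal_mono h8 hA8L
      rwa [ENNReal.toReal_mul, ENNReal.toReal_ofNat] at h9
    rw [htsum, hInt]
    linarith
end

section
/- Under the hypotheses of the preceding statement (g decreasing and (β−1)-Hölder with constant L_* on [a − h_max, b + h_max], ε > 0), the integral ∫_a^b Γ(x) dx is at most 18·V·min{ (Vε)^{1/3}, (L_* ε^β)^{1/(2β+1)} } + (b−a)·ε/h_max³, where Γ(x) := inf_{h ∈ [h_min, h_max]} max_{ω ∈ {−1,1}} [ ω(g(x)−g(x+ωh)) ∨ (ε/h³)^{1/2} ]², V := g(a − h_max) − g(b + h_max), h_min := (ε/L_*²)^{1/(2β+1)} ∧ h_max. -/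
open MeasureTheory Real

/-- `ξ_x(h) := max_{ω ∈ {−1,1}} [ ω(g(x) − g(x+ωh)) ∨ (ε/h³)^{1/2} ]`. -/
noncomputable def xiFn (g : ℝ → ℝ) (ε x h : ℝ) : ℝ :=
  max (max (g x - g (x + h)) (g (x - h) - g x)) (Real.sqrt (ε / h ^ 3))

/-- `Γ(x) := inf_{h ∈ [hmin, hmax]} ξ_x(h)²`. -/
noncomputable def GammaFn (g : ℝ → ℝ) (ε hmin hmax x : ℝ) : ℝ :=
  sInf ((fun h => (xiFn g ε x h) ^ 2) '' Set.Icc hmin hmax)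



private lemma shift_integral_le (g : ℝ → ℝ) (a b hmax w : ℝ) (hab : a ≤ b) (hw : 0 < w)
    (hwm : w ≤ hmax) (hmono : AntitoneOn g (Set.Icc (a - hmax) (b + hmax))) :
    ∫ x in a..b, (g (x - w) - g (x + w)) ≤ 2 * w * (g (a - hmax) - g (b + hmax)) := by
  have hIcc : ∀ u v : ℝ, a - hmax ≤ u → u ≤ b + hmax → a - hmax ≤ v → v ≤ b + hmax →
      IntervalIntegrable g volume u v := by
    intro u v h1 h2 h3 h4
    apply AntitoneOn.intervalIntegrable
    apply hmono.mono
    intro z hz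
    rw [Set.mem_uIcc] at hz
    constructor
    · rcases hz with h | h <;> linarith [h.1]
    · rcases hz with h | h <;> linarith [h.2]
  have m1 : a - hmax ≤ a - w := by linarith
  have m2 : a - w ≤ b + hmax := by linarith
  have m3 : a - hmax ≤ a + w := by linarith
  have m4 : a + w ≤ b + hmax := by linarith
  have m5 : a - hmax ≤ b - w := by linarith
  have m6 : b - w ≤ b + hmax := by linarith
  have m7 : a - hmax ≤ b + w := by linarith
  have m8 : b + w ≤ b + hmax := by linarith
  have e1 : (∫ x in a..b, g (x - w)) = ∫ x in (a-w)..(b-w), g x :=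
    intervalIntegral.integral_comp_sub_right g w
  have e2 : (∫ x in a..b, g (x + w)) = ∫ x in (a+w)..(b+w), g x :=
    intervalIntegral.integral_comp_add_right g w
  have i1 : IntervalIntegrable (fun x => g (x - w)) volume a b := by
    have := (hIcc _ _ m1 m2 m5 m6).comp_sub_right w
    simpa using this
  have i2 : IntervalIntegrable (fun x => g (x + w)) volume a b := by
    have := (hIcc _ _ m3 m4 m7 m8).comp_add_right w
    simpa using this
  rw [intervalIntegral.integral_sub i1 i2, e1, e2]
  have s1 : (∫ x in (a-w)..(b-w), g x)
      = (∫ x in (a-w)..(a+w), g x) + ∫ x in (a+w)..(b-w), g x :=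
    (intervalIntegral.integral_add_adjacent_intervals (hIcc _ _ m1 m2 m3 m4)
      (hIcc _ _ m3 m4 m5 m6)).symm
  have s2 : (∫ x in (a+w)..(b+w), g x)
      = (∫ x in (a+w)..(b-w), g x) + ∫ x in (b-w)..(b+w), g x :=
    (intervalIntegral.integral_add_adjacent_intervals (hIcc _ _ m3 m4 m5 m6)
      (hIcc _ _ m5 m6 m7 m8)).symm
  rw [s1, s2]
  have b1 : (∫ x in (a-w)..(a+w), g x) ≤ 2 * w * g (a - hmax) := by
    have : (∫ x in (a-w)..(a+w), g x) ≤ ∫ _x in (a-w)..(a+w), g (a - hmax) := by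
      apply intervalIntegral.integral_mono_on (by linarith) (hIcc _ _ m1 m2 m3 m4)
        (intervalIntegrable_const)
      intro x hx
      exact hmono (by constructor <;> linarith) (by constructor <;> linarith [hx.1, hx.2])
        (by linarith [hx.1])
    simpa using this.trans_eq (by rw [intervalIntegral.integral_const]; ring_nf)
  have b2 : 2 * w * g (b + hmax) ≤ ∫ x in (b-w)..(b+w), g x := by
    have : (∫ _x in (b-w)..(b+w), g (b + hmax)) ≤ ∫ x in (b-w)..(b+w), g x := by
      apply intervalIntegral.integral_mono_on (by linarith) (intervalIntegrable_const)
        (hIcc _ _ m5 m6 m7 m8)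
      intro x hx
      exact hmono (by constructor <;> linarith [hx.1, hx.2]) (by constructor <;> linarith)
        (by linarith [hx.2])
    refine le_trans (le_of_eq ?_) this
    rw [intervalIntegral.integral_const]; ring_nf
  linarith

private lemma gamma_le_max (g : ℝ → ℝ) (a b hmax hmin ε : ℝ) (hab : a ≤ b)
    (hmono : AntitoneOn g (Set.Icc (a - hmax) (b + hmax)))
    (x : ℝ) (hx : x ∈ Set.Icc a b) (h : ℝ) (hh0 : 0 < h) (hh : h ∈ Set.Icc hmin hmax) :
    GammaFn g ε hmin hmax x ≤ max ((g (x - h) - g (x + h)) ^ 2) (ε / h ^ 3) := by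
  obtain ⟨hx1, hx2⟩ := hx
  obtain ⟨hhl, hhr⟩ := hh
  have hbdd : BddBelow ((fun h => (xiFn g ε x h) ^ 2) '' Set.Icc hmin hmax) := by
    refine ⟨0, fun y hy => ?_⟩
    obtain ⟨h', _, rfl⟩ := hy
    positivity
  have hmem : (xiFn g ε x h) ^ 2 ∈ (fun h => (xiFn g ε x h) ^ 2) '' Set.Icc hmin hmax :=
    ⟨h, ⟨hhl, hhr⟩, rfl⟩
  refine le_trans (csInf_le hbdd hmem) ?_
  set D := g (x - h) - g (x + h) with hD
  have hd1 : x - h ∈ Set.Icc (a - hmax) (b + hmax) := by constructor <;> linarith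
  have hd2 : x ∈ Set.Icc (a - hmax) (b + hmax) := by constructor <;> linarith
  have hd3 : x + h ∈ Set.Icc (a - hmax) (b + hmax) := by constructor <;> linarith
  have hA : g x - g (x + h) ≤ D := by
    have := hmono hd1 hd2 (by linarith)
    simp only [hD]; linarith
  have hB : g (x - h) - g x ≤ D := by
    have := hmono hd2 hd3 (by linarith)
    simp only [hD]; linarith
  have hD0 : 0 ≤ D := by
    have := hmono hd1 hd3 (by linarith)
    simp only [hD]; linarith
  have hxi : xiFn g ε x h ≤ max D (Real.sqrt (ε / h ^ 3)) :=
    max_le_max (max_le hA hB) le_rfl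
  have hxi0 : 0 ≤ xiFn g ε x h := le_trans (Real.sqrt_nonneg _) (le_max_right _ _)
  have hsq : (xiFn g ε x h) ^ 2 ≤ (max D (Real.sqrt (ε / h ^ 3))) ^ 2 :=
    pow_le_pow_left₀ hxi0 hxi 2
  refine hsq.trans ?_
  rcases le_total D (Real.sqrt (ε / h ^ 3)) with hc | hc
  · rw [max_eq_right hc]
    rcases le_or_gt 0 (ε / h ^ 3) with hε3 | hε3
    · rw [Real.sq_sqrt hε3]; exact le_max_right _ _
    · have hDeq : D = 0 := le_antisymm (by rwa [Real.sqrt_eq_zero_of_nonpos hε3.le] at hc) hD0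
      rw [Real.sqrt_eq_zero_of_nonpos hε3.le]
      simpa [hDeq] using le_max_left (D ^ 2) (ε / h ^ 3)
  · rw [max_eq_left hc]; exact le_max_left _ _

private lemma gamma_ge (g : ℝ → ℝ) (hmax hmin ε : ℝ) (hε : 0 < ε) (hmin0 : 0 < hmin)
    (hminmax : hmin ≤ hmax) (x : ℝ) :
    ε / hmax ^ 3 ≤ GammaFn g ε hmin hmax x := by
  have hne : ((fun h => (xiFn g ε x h) ^ 2) '' Set.Icc hmin hmax).Nonempty :=
    ⟨_, ⟨hmin, ⟨le_refl _, hminmax⟩, rfl⟩⟩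
  apply le_csInf hne
  rintro y ⟨h, hh, rfl⟩
  have hh0 : 0 < h := lt_of_lt_of_le hmin0 hh.1
  have h1 : ε / hmax ^ 3 ≤ ε / h ^ 3 := by
    apply div_le_div_of_nonneg_left hε.le (by positivity)
    gcongr
    exact hh.2
  refine h1.trans ?_
  have h2 : Real.sqrt (ε / h ^ 3) ≤ xiFn g ε x h := le_max_right _ _
  have := pow_le_pow_left₀ (Real.sqrt_nonneg _) h2 2
  rwa [Real.sq_sqrt (by positivity)] at this


private lemma powN_eq (x : ℝ) (hx : 0 ≤ x) (r : ℝ) (n : ℕ) :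
    (x ^ r) ^ (n : ℕ) = x ^ (r * n) := by
  rw [← Real.rpow_natCast (x ^ r) n, ← Real.rpow_mul hx]

private lemma rpowpow (x : ℝ) (hx : 0 ≤ x) (r : ℝ) (n m : ℕ) (h : r * (n:ℝ) = (m:ℝ)) :
    (x ^ r) ^ (n:ℕ) = x ^ (m:ℕ) := by
  rw [powN_eq x hx, h, Real.rpow_natCast]

private lemma pow_inj6 {p q : ℝ} (hp : 0 ≤ p) (hq : 0 ≤ q) (h : p ^ (6:ℕ) = q ^ (6:ℕ)) :
    p = q := by
  have := congrArg (fun z : ℝ => z ^ ((1:ℝ)/6)) h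
  exact (pow_left_inj₀ hp hq (by norm_num)).mp h

private lemma pow_le6 {p q : ℝ} (hp : 0 ≤ p) (hq : 0 ≤ q) (h : p ^ (6:ℕ) ≤ q ^ (6:ℕ)) :
    p ≤ q := (pow_le_pow_iff_left₀ hp hq (by norm_num)).mp h

private lemma pow_inj2 {p q : ℝ} (hp : 0 ≤ p) (hq : 0 ≤ q) (h : p ^ (2:ℕ) = q ^ (2:ℕ)) :
    p = q := by nlinarith [sq_nonneg (p - q), sq_nonneg (p + q)]

private lemma pow_le2 {p q : ℝ} (hp : 0 ≤ p) (hq : 0 ≤ q) (h : p ^ (2:ℕ) ≤ q ^ (2:ℕ)) :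
    p ≤ q := (pow_le_pow_iff_left₀ hp hq (by norm_num)).mp h

private lemma cube_aux {u : ℝ} (hu0 : 0 < u) (h1 : (1:ℝ)/2 ≤ u^3) (h2 : u ≤ 1) :
    1 + u^3 ≤ 2*u := by
  have h3 : 0 ≤ u^2 + u - 1 := by
    nlinarith [mul_nonneg (sq_nonneg u) (sub_nonneg.2 h2),
      mul_nonneg (mul_nonneg hu0.le (sub_nonneg.2 h2)) (by linarith : (0:ℝ) ≤ 1 + u)]
  nlinarith [mul_nonneg (sub_nonneg.2 h2) h3]

set_option maxHeartbeats 1600000 in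
private lemma final_algebra (ε hmin ρ K V E1 E2 : ℝ)
    (hε : 0 < ε) (hmin0 : 0 < hmin) (hρ : 0 < ρ) (hminρ : hmin ≤ ρ)
    (hK0 : 0 ≤ K) (hK2 : K ^ 2 = ε / ρ ^ 3) (hV : 0 ≤ V)
    (hE1 : E1 = (V * ε) ^ ((1:ℝ)/3)) (hE2 : E2 = (ε / ρ) ^ ((1:ℝ)/2)) :
    12 * V * ε ^ ((1:ℝ)/3) * (min (min (V^2) (4*K^2)) (ε/hmin^3)) ^ ((1:ℝ)/6)
      + 4 * V * hmin * ((min (V^2) (4*K^2)) ^ ((1:ℝ)/2)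
          - (min (min (V^2) (4*K^2)) (ε/hmin^3)) ^ ((1:ℝ)/2))
      ≤ 16 * V * min E1 E2 := by
  have hρ3 : (0:ℝ) < ρ^3 := by positivity
  have hmin3 : (0:ℝ) < hmin^3 := by positivity
  have hK2' : K^2 * ρ^3 = ε := by rw [hK2]; field_simp
  set T := min (V^2) (4*K^2) with hTdef
  set c := ε / hmin^3 with hcdef
  have hc0 : 0 < c := by positivity
  have hc' : c * hmin^3 = ε := by rw [hcdef]; field_simp
  have hT0 : 0 ≤ T := le_min (sq_nonneg _) (by positivity)
  have hE1nn : 0 ≤ E1 := by rw [hE1]; positivity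
  have hE2nn : 0 ≤ E2 := by rw [hE2]; positivity
  have hTV : T ≤ V^2 := min_le_left _ _
  have hTK : T ≤ 4*K^2 := min_le_right _ _
  have hE1_6 : E1 ^ (6:ℕ) = (V*ε) ^ (2:ℕ) := by
    rw [hE1, rpowpow _ (by positivity) _ 6 2 (by norm_num)]
  have hE2_2 : E2 ^ (2:ℕ) = ε / ρ := by
    rw [hE2, rpowpow _ (by positivity) _ 2 1 (by norm_num), pow_one]
  have hE2' : E2 ^ 2 * ρ = ε := by rw [hE2_2]; field_simp
  have hsplit : ∀ X:ℝ, X ≤ 16*V*E1 → X ≤ 16*V*E2 → X ≤ 16*V*(min E1 E2) := by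
    intro X h1 h2
    rcases le_total E1 E2 with h|h
    · rw [min_eq_left h]; exact h1
    · rw [min_eq_right h]; exact h2
  rcases le_total T c with hTc | hcT
  · -- m = T : only the first term
    rw [min_eq_left hTc, sub_self, mul_zero, add_zero]
    apply hsplit
    · -- vs E1
      have h1 : T ^ ((1:ℝ)/6) ≤ V ^ ((1:ℝ)/3) := by
        calc T ^ ((1:ℝ)/6) ≤ (V^2) ^ ((1:ℝ)/6) := by
              apply Real.rpow_le_rpow hT0 ?_ (by norm_num)
              exact_mod_cast hTV
          _ = V ^ ((1:ℝ)/3) := by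
              rw [← Real.rpow_natCast V 2, ← Real.rpow_mul hV]; norm_num
      have h2 : ε ^ ((1:ℝ)/3) * T ^ ((1:ℝ)/6) ≤ E1 := by
        rw [hE1, Real.mul_rpow hV hε.le, mul_comm]
        exact mul_le_mul_of_nonneg_right h1 (by positivity)
      calc 12 * V * ε ^ ((1:ℝ)/3) * T ^ ((1:ℝ)/6)
          = 12*(V*(ε ^ ((1:ℝ)/3) * T ^ ((1:ℝ)/6))) := by ring
        _ ≤ 12*(V*E1) := by
            exact mul_le_mul_of_nonneg_left (mul_le_mul_of_nonneg_left h2 hV) (by norm_num)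
        _ ≤ 16*(V*E1) := by
            have h9 : 0 ≤ V*E1 := mul_nonneg hV hE1nn
            linarith only [h9]
        _ = 16*V*E1 := by ring
    · -- vs E2
      have hX0 : (0:ℝ) ≤ ε ^ ((1:ℝ)/3) * (4*K^2) ^ ((1:ℝ)/6) := by positivity
      have hXle : ε ^ ((1:ℝ)/3) * (4*K^2) ^ ((1:ℝ)/6) ≤ (4/3) * E2 := by
        apply pow_le6 hX0 (by positivity)
        have e1 : (ε ^ ((1:ℝ)/3) * (4*K^2) ^ ((1:ℝ)/6)) ^ (6:ℕ)
            = ε^(2:ℕ) * (4*K^2) := by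
          rw [mul_pow, rpowpow _ hε.le _ 6 2 (by norm_num),
            rpowpow _ (by positivity) _ 6 1 (by norm_num), pow_one]
        have e2 : ((4:ℝ)/3 * E2) ^ (6:ℕ) = (4096/729) * (E2^(2:ℕ))^(3:ℕ) := by ring
        rw [e1, e2, hE2_2]
        have key : ε^(2:ℕ) * (4*K^2) * ρ^3 ≤ (4096/729) * (ε/ρ)^(3:ℕ) * ρ^3 := by
          have r1 : ε^(2:ℕ) * (4*K^2) * ρ^3 = 4*ε^(2:ℕ)*(K^2*ρ^3) := by ring
          have r2 : (ε/ρ)^(3:ℕ) * ρ^3 = ε^3 := by field_simp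
          rw [r1, hK2', show (4096:ℝ)/729 * (ε/ρ)^(3:ℕ) * ρ^3
            = (4096/729) * ((ε/ρ)^(3:ℕ) * ρ^3) by ring, r2]
          have h0 : 0 < ε^3 := pow_pos hε 3
          have he : 4*ε^(2:ℕ)*ε = 4*ε^3 := by ring
          rw [he]
          linarith only [h0]
        exact le_of_mul_le_mul_right key hρ3
      have h1 : T ^ ((1:ℝ)/6) ≤ (4*K^2) ^ ((1:ℝ)/6) :=
        Real.rpow_le_rpow hT0 hTK (by norm_num)
      have h2 : ε ^ ((1:ℝ)/3) * T ^ ((1:ℝ)/6) ≤ (4/3)*E2 :=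
        le_trans (mul_le_mul_of_nonneg_left h1 (by positivity)) hXle
      calc 12 * V * ε ^ ((1:ℝ)/3) * T ^ ((1:ℝ)/6)
          = 12*(V*(ε ^ ((1:ℝ)/3) * T ^ ((1:ℝ)/6))) := by ring
        _ ≤ 12*(V*(4/3*E2)) := by
            exact mul_le_mul_of_nonneg_left (mul_le_mul_of_nonneg_left h2 hV) (by norm_num)
        _ = 16*V*E2 := by ring
  · -- m = c
    rw [min_eq_right hcT]
    set q := (ε/hmin) ^ ((1:ℝ)/2) with hqdef
    have hq0 : 0 ≤ q := by positivity
    have hq2 : q^(2:ℕ) = ε/hmin := by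
      rw [hqdef, rpowpow _ (by positivity) _ 2 1 (by norm_num), pow_one]
    have hq2' : q^2 * hmin = ε := by rw [hq2]; field_simp
    have f1 : ε ^ ((1:ℝ)/3) * c ^ ((1:ℝ)/6) = q := by
      apply pow_inj6 (by positivity) hq0
      rw [mul_pow, rpowpow _ hε.le _ 6 2 (by norm_num),
        rpowpow _ hc0.le _ 6 1 (by norm_num), pow_one,
        show q^(6:ℕ) = (q^(2:ℕ))^(3:ℕ) by ring, hq2, hcdef]
      field_simp
      try ring
    have f2 : hmin * c ^ ((1:ℝ)/2) = q := by
      apply pow_inj2 (by positivity) hq0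
      rw [mul_pow, rpowpow _ hc0.le _ 2 1 (by norm_num), pow_one, hq2, hcdef]
      field_simp
      try ring
    have f3 : T ^ ((1:ℝ)/2) ≤ 2*K := by
      have e1 : (4*K^2) ^ ((1:ℝ)/2) = 2*K := by
        apply pow_inj2 (Real.rpow_nonneg (by positivity) _) (by linarith)
        rw [rpowpow (4*K^2) (by positivity) ((1:ℝ)/2) 2 1 (by norm_num), pow_one]
        ring
      calc T ^ ((1:ℝ)/2) ≤ (4*K^2) ^ ((1:ℝ)/2) := Real.rpow_le_rpow hT0 hTK (by norm_num)
        _ = 2*K := e1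
    have hhk : hmin * K ≤ q := by
      apply pow_le2 (by positivity) hq0
      rw [mul_pow, hq2]
      have : K^2 ≤ ε/hmin^3 := by
        rw [hK2]
        apply div_le_div_of_nonneg_left hε.le hmin3
        gcongr
      calc hmin^(2:ℕ) * K^(2:ℕ) ≤ hmin^2 * (ε/hmin^3) := by
            apply mul_le_mul_of_nonneg_left this (by positivity)
        _ = ε/hmin := by field_simp; try ring
    -- the quantity is ≤ 8 V q + 8 V (hmin K)
    have hmain : 12 * V * ε ^ ((1:ℝ)/3) * c ^ ((1:ℝ)/6)
        + 4 * V * hmin * (T ^ ((1:ℝ)/2) - c ^ ((1:ℝ)/2))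
        ≤ 8*V*q + 8*V*(hmin*K) := by
      have e1 : 12 * V * ε ^ ((1:ℝ)/3) * c ^ ((1:ℝ)/6) = 12*V*q := by
        rw [← f1]; ring
      have e2 : 4 * V * hmin * (T ^ ((1:ℝ)/2) - c ^ ((1:ℝ)/2))
          = 4*V*(hmin*T ^ ((1:ℝ)/2)) - 4*V*q := by
        rw [← f2]; ring
      rw [e1, e2]
      have h3 : hmin * T ^ ((1:ℝ)/2) ≤ hmin*(2*K) :=
        mul_le_mul_of_nonneg_left f3 hmin0.le
      have u0 : V*(hmin*T ^ ((1:ℝ)/2)) ≤ V*(hmin*(2*K)) := mul_le_mul_of_nonneg_left h3 hV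
      linarith only [u0]
    refine hmain.trans (hsplit _ ?_ ?_)
    · -- vs E1 : q ≤ E1 and hmin K ≤ q
      have hqE1 : q ≤ E1 := by
        apply pow_le6 hq0 hE1nn
        rw [hE1_6, show q^(6:ℕ) = (q^(2:ℕ))^(3:ℕ) by ring, hq2]
        have hcV : c ≤ V^2 := le_trans hcT hTV
        have heq3 : (ε/hmin)^(3:ℕ) = ε^2 * c := by
          rw [hcdef]; field_simp; try ring
        rw [heq3]
        calc ε^2*c ≤ ε^2*V^2 := mul_le_mul_of_nonneg_left hcV (by positivity)
          _ = (V*ε)^(2:ℕ) := by ring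
      have u1 : V*(hmin*K) ≤ V*E1 := mul_le_mul_of_nonneg_left (hhk.trans hqE1) hV
      have u2 : V*q ≤ V*E1 := mul_le_mul_of_nonneg_left hqE1 hV
      linarith only [u1, u2]
    · -- vs E2
      set u := (hmin/ρ) ^ ((1:ℝ)/2) with hudef
      have hu0 : 0 < u := Real.rpow_pos_of_pos (by positivity) _
      have hu2 : u^(2:ℕ) = hmin/ρ := by
        rw [hudef, rpowpow _ (by positivity) _ 2 1 (by norm_num), pow_one]
      have hu1 : u ≤ 1 := by
        rw [hudef]
        exact Real.rpow_le_one (by positivity) (by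
          rw [div_le_one hρ]; exact hminρ) (by norm_num)
      have hρ4 : ρ^3 ≤ 4*hmin^3 := by
        have h1 : c ≤ 4*K^2 := le_trans hcT hTK
        have h2 : c * (hmin^3 * ρ^3) ≤ 4*K^2 * (hmin^3 * ρ^3) := by
          apply mul_le_mul_of_nonneg_right h1 (by positivity)
        rw [show c * (hmin^3*ρ^3) = (c*hmin^3)*ρ^3 by ring, hc',
          show 4*K^2*(hmin^3*ρ^3) = 4*(K^2*ρ^3)*hmin^3 by ring, hK2'] at h2
        have h3 : ε * ρ^3 ≤ ε * (4*hmin^3) := by linarith only [h2]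
        exact (mul_le_mul_iff_right₀ hε).mp h3
      have hu3 : (1:ℝ)/2 ≤ u^3 := by
        have h6 : u^6 = (hmin/ρ)^(3:ℕ) := by
          rw [show u^(6:ℕ) = (u^(2:ℕ))^(3:ℕ) by ring, hu2]
        have h14 : (1:ℝ)/4 ≤ (hmin/ρ)^(3:ℕ) := by
          rw [div_pow, le_div_iff₀ hρ3]
          linarith only [hρ4]
        have h15 : (1:ℝ)/4 ≤ (u^3)^2 := by
          rw [show (u^3)^2 = u^6 by ring, h6]; exact h14
        have hx3 : 0 ≤ u^3 := pow_nonneg hu0.le 3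
        by_contra hlt
        push_neg at hlt
        have h16 : (u^3)^2 < 1/4 := by
          have h17 : u^3*u^3 < (1/2)*(1/2) :=
            mul_lt_mul' hlt.le hlt hx3 (by norm_num)
          calc (u^3)^2 = u^3*u^3 := sq (u^3) ▸ by ring
            _ < (1/2)*(1/2) := h17
            _ = 1/4 := by norm_num
        linarith only [h15, h16]
      have hcube := cube_aux hu0 hu3 hu1
      have f5 : q * u = E2 := by
        apply pow_inj2 (by positivity) hE2nn
        rw [mul_pow, hq2, hu2, hE2_2]
        field_simp
        try ring
      have f6 : hmin * K = E2 * u^2 := by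
        apply pow_inj2 (by positivity) (by positivity)
        rw [mul_pow, mul_pow, hK2, hE2_2, show (u^2)^(2:ℕ) = (u^(2:ℕ))^2 by ring, hu2]
        field_simp
        try ring
      have hsum : q + hmin*K ≤ 2*E2 := by
        have key : (q + hmin*K)*u ≤ (2*E2)*u := by
          have e3 : (q + hmin*K)*u = E2*(1+u^3) := by
            rw [f6, ← f5]; ring
          rw [e3]
          calc E2*(1+u^3) ≤ E2*(2*u) := mul_le_mul_of_nonneg_left hcube hE2nn
            _ = (2*E2)*u := by ring
        exact le_of_mul_le_mul_right key hu0
      have u3 : V*(q + hmin*K) ≤ V*(2*E2) := mul_le_mul_of_nonneg_left hsum hV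
      linarith only [u3]

set_option maxHeartbeats 4000000 in
/-- Integrated error bound for the pointwise-optimal error of a decreasing Hölder function:
`∫_a^b Γ ≤ 18 V min{(Vε)^{1/3}, (L ε^β)^{1/(2β+1)}} + (b−a) ε / h_max³`. -/
theorem gamma_integral_bound
    (a b hmax L β ε : ℝ) (hab : a < b) (hhmax : 0 < hmax) (hL : 0 < L)
    (hβ : β ∈ Set.Icc (1:ℝ) 2) (hε : 0 < ε)
    (g : ℝ → ℝ)
    (hmono : AntitoneOn g (Set.Icc (a - hmax) (b + hmax)))
    (hholder : ∀ x ∈ Set.Icc (a - hmax) (b + hmax), ∀ y ∈ Set.Icc (a - hmax) (b + hmax),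
      |g x - g y| ≤ L * |x - y| ^ (β - 1))
    (hmin V : ℝ)
    (hhmin : hmin = min ((ε / L ^ 2) ^ (1 / (2 * β + 1))) hmax)
    (hV : V = g (a - hmax) - g (b + hmax)) :
    ∫ x in a..b, GammaFn g ε hmin hmax x ≤
      18 * V * min ((V * ε) ^ ((1:ℝ)/3)) ((L * ε ^ β) ^ (1 / (2 * β + 1))) +
        (b - a) * ε / hmax ^ 3 := by
  obtain ⟨hβ1, hβ2⟩ := hβ
  have habl : a ≤ b := hab.le
  set κ := ε / hmax ^ 3 with hκdef
  have hκ0 : 0 < κ := by positivity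
  have he0 : (2*β+1) ≠ 0 := ne_of_gt (by linarith)
  set ρ := (ε / L ^ 2) ^ (1 / (2 * β + 1)) with hρdef
  have hρpos : 0 < ρ := Real.rpow_pos_of_pos (by positivity) _
  have hmin0 : 0 < hmin := by rw [hhmin]; exact lt_min hρpos hhmax
  have hminmax : hmin ≤ hmax := by rw [hhmin]; exact min_le_right _ _
  have hminρ : hmin ≤ ρ := by rw [hhmin]; exact min_le_left _ _
  have hρe : ρ ^ (2*β+1) = ε / L^2 := by
    rw [hρdef, ← Real.rpow_mul (by positivity), one_div, inv_mul_cancel₀ he0, Real.rpow_one]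
  set K := L * ρ ^ (β - 1) with hKdef
  have hK0 : 0 ≤ K := mul_nonneg hL.le (Real.rpow_nonneg hρpos.le _)
  have hρ3 : (0:ℝ) < ρ^3 := by positivity
  have hK2 : K ^ 2 = ε / ρ ^ 3 := by
    have h1 : (ρ ^ (β-1)) ^ (2:ℕ) = ρ ^ (2*β-2) := by
      rw [powN_eq ρ hρpos.le (β-1) 2, show ((β:ℝ)-1)*((2:ℕ):ℝ) = 2*β-2 by push_cast; ring]
    have h2 : ρ ^ (2*β-2) * ρ ^ ((3:ℕ):ℝ) = ρ ^ (2*β+1) := by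
      rw [← Real.rpow_add hρpos]
      congr 1
      push_cast
      ring
    have h3 : K^2 * ρ^3 = ε := by
      rw [hKdef, mul_pow, h1, ← Real.rpow_natCast ρ 3]
      calc L^2 * ρ ^ (2*β-2) * ρ ^ ((3:ℕ):ℝ) = L^2 * (ρ ^ (2*β-2) * ρ ^ ((3:ℕ):ℝ)) := by
            ring
        _ = L^2 * ρ ^ (2*β+1) := by rw [h2]
        _ = L^2 * (ε/L^2) := by rw [hρe]
        _ = ε := by field_simp
    field_simp [← h3]
    exact h3
  have hVnn : 0 ≤ V := by
    rw [hV]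
    have := hmono (Set.mem_Icc.2 ⟨le_refl _, by linarith⟩)
      (Set.mem_Icc.2 ⟨by linarith, le_refl _⟩) (by linarith)
    linarith
  set E1 := (V * ε) ^ ((1:ℝ)/3) with hE1def
  set E2 := (L * ε ^ β) ^ (1 / (2 * β + 1)) with hE2def
  have hE1nn : 0 ≤ E1 := Real.rpow_nonneg (by positivity) _
  have hE2nn : 0 ≤ E2 := Real.rpow_nonneg (by positivity) _
  have hE2eq : E2 = (ε / ρ) ^ ((1:ℝ)/2) := by
    have hρform : ρ = ε ^ ((1:ℝ)/(2*β+1)) / L ^ ((2:ℝ)/(2*β+1)) := by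
      rw [hρdef, Real.div_rpow hε.le (by positivity), ← Real.rpow_natCast L 2,
        ← Real.rpow_mul hL.le]
      norm_num
      rw [show (2:ℝ) * (2*β+1)⁻¹ = 2/(2*β+1) by ring]
    have h1me : (1:ℝ) - 1/(2*β+1) = β*((2:ℝ)/(2*β+1)) := by field_simp; ring
    have hA : ε / ρ = (L * ε ^ β) ^ ((2:ℝ)/(2*β+1)) := by
      calc ε / ρ = ε / (ε ^ ((1:ℝ)/(2*β+1)) / L ^ ((2:ℝ)/(2*β+1))) := by rw [← hρform]
        _ = (ε ^ (1:ℝ) / ε ^ ((1:ℝ)/(2*β+1))) * L ^ ((2:ℝ)/(2*β+1)) := by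
            rw [Real.rpow_one, div_div_eq_mul_div]; ring
        _ = ε ^ ((1:ℝ) - 1/(2*β+1)) * L ^ ((2:ℝ)/(2*β+1)) := by
            rw [Real.rpow_sub hε]
        _ = ε ^ (β*((2:ℝ)/(2*β+1))) * L ^ ((2:ℝ)/(2*β+1)) := by rw [h1me]
        _ = (ε ^ β) ^ ((2:ℝ)/(2*β+1)) * L ^ ((2:ℝ)/(2*β+1)) := by
            rw [Real.rpow_mul hε.le]
        _ = (L * ε ^ β) ^ ((2:ℝ)/(2*β+1)) := by
            rw [Real.mul_rpow hL.le (Real.rpow_nonneg hε.le β)]; ring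
    rw [hE2def, hA, ← Real.rpow_mul (by positivity : (0:ℝ) ≤ L * ε ^ β),
      show (2:ℝ)/(2*β+1)*(1/2) = 1/(2*β+1) by ring]
  -- nonnegativity of the RHS
  have hRHS : 0 ≤ 18 * V * min E1 E2 + (b - a) * ε / hmax ^ 3 := by
    have h1 : 0 ≤ min E1 E2 := le_min hE1nn hE2nn
    have h2 : 0 ≤ (b - a) * ε / hmax ^ 3 := by
      apply div_nonneg _ (by positivity)
      exact mul_nonneg (by linarith) hε.le
    nlinarith [mul_nonneg hVnn h1]
  by_cases hInt : IntervalIntegrable (GammaFn g ε hmin hmax) volume a b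
  swap
  · rw [intervalIntegral.integral_undef hInt]; exact hRHS
  -- basic facts about the increments D x w = g (x-w) - g (x+w)
  have hIccmem : ∀ x ∈ Set.Icc a b, ∀ w : ℝ, 0 < w → w ≤ hmax →
      (x - w ∈ Set.Icc (a - hmax) (b + hmax)) ∧ (x + w ∈ Set.Icc (a - hmax) (b + hmax)) := by
    intro x hx w hw0 hwm
    obtain ⟨hx1, hx2⟩ := hx
    exact ⟨⟨by linarith, by linarith⟩, ⟨by linarith, by linarith⟩⟩
  have hDfacts : ∀ x ∈ Set.Icc a b, ∀ w : ℝ, 0 < w → w ≤ hmax →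
      0 ≤ g (x - w) - g (x + w) ∧ g (x - w) - g (x + w) ≤ V := by
    intro x hx w hw0 hwm
    obtain ⟨hm1, hm2⟩ := hIccmem x hx w hw0 hwm
    obtain ⟨hx1, hx2⟩ := hx
    constructor
    · have := hmono hm1 hm2 (by linarith)
      linarith
    · rw [hV]
      have h1 := hmono (Set.mem_Icc.2 ⟨le_refl _, by linarith⟩) hm1 (by linarith [hm1.1])
      have h2 := hmono hm2 (Set.mem_Icc.2 ⟨by linarith, le_refl _⟩) (by linarith [hm2.2])
      linarith
  -- Hölder bound at hmin
  have hhold : ∀ x ∈ Set.Icc a b, g (x - hmin) - g (x + hmin) ≤ 2*K := by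
    intro x hx
    obtain ⟨hm1, hm2⟩ := hIccmem x hx hmin hmin0 hminmax
    have h1 := hholder _ hm1 _ hm2
    have habs : |(x - hmin) - (x + hmin)| = 2*hmin := by
      rw [show (x - hmin) - (x + hmin) = -(2*hmin) by ring, abs_neg,
        abs_of_pos (by linarith)]
    rw [habs] at h1
    have h2h : (2*hmin) ^ (β-1) ≤ 2 * ρ ^ (β-1) := by
      rw [Real.mul_rpow (by norm_num) hmin0.le]
      have e1 : (2:ℝ) ^ (β-1) ≤ 2 ^ (1:ℝ) :=
        Real.rpow_le_rpow_of_exponent_le (by norm_num) (by linarith)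
      have e2 : hmin ^ (β-1) ≤ ρ ^ (β-1) :=
        Real.rpow_le_rpow hmin0.le hminρ (by linarith)
      calc (2:ℝ) ^ (β-1) * hmin ^ (β-1) ≤ 2 ^ (1:ℝ) * ρ ^ (β-1) :=
            mul_le_mul e1 e2 (Real.rpow_nonneg hmin0.le _) (by positivity)
        _ = 2 * ρ ^ (β-1) := by rw [Real.rpow_one]
    have h3 : L * (2*hmin) ^ (β-1) ≤ 2*K := by
      rw [hKdef]
      calc L * (2*hmin) ^ (β-1) ≤ L * (2 * ρ ^ (β-1)) :=
            mul_le_mul_of_nonneg_left h2h hL.le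
        _ = 2 * (L * ρ ^ (β-1)) := by ring
    calc g (x - hmin) - g (x + hmin) ≤ |g (x - hmin) - g (x + hmin)| := le_abs_self _
      _ ≤ L * (2*hmin) ^ (β-1) := h1
      _ ≤ 2*K := h3
  -- G and its bounds
  set G : ℝ → ℝ := fun x => GammaFn g ε hmin hmax x - κ with hGdef
  have hΓge : ∀ x, κ ≤ GammaFn g ε hmin hmax x :=
    fun x => hκdef ▸ gamma_ge g hmax hmin ε hε hmin0 hminmax x
  set T := min (V^2) (4*K^2) with hTdef
  have hT0 : 0 ≤ T := le_min (sq_nonneg _) (by positivity)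
  have hGT : ∀ x ∈ Set.Icc a b, G x ≤ T := by
    intro x hx
    have h1 := gamma_le_max g a b hmax hmin ε habl hmono x hx hmax hhmax
      ⟨hminmax, le_refl _⟩
    obtain ⟨hd0, hdV⟩ := hDfacts x hx hmax hhmax le_rfl
    have h2 : GammaFn g ε hmin hmax x ≤ V^2 + κ := by
      refine h1.trans (max_le ?_ (by rw [hκdef]; nlinarith [sq_nonneg V]))
      have := pow_le_pow_left₀ hd0 hdV 2
      rw [hκdef]; nlinarith
    have h3 := gamma_le_max g a b hmax hmin ε habl hmono x hx hmin hmin0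
      ⟨le_refl _, hminmax⟩
    obtain ⟨he0', _⟩ := hDfacts x hx hmin hmin0 hminmax
    have h4 : (g (x - hmin) - g (x + hmin))^2 ≤ 4*K^2 := by
      have := pow_le_pow_left₀ he0' (hhold x hx) 2
      nlinarith
    have h5 : ε/hmin^3 ≤ max (K^2) κ := by
      rcases le_total ρ hmax with hc | hc
      · have : hmin = ρ := by rw [hhmin, min_eq_left hc]
        rw [this, ← hK2]
        exact le_max_left _ _
      · have : hmin = hmax := by rw [hhmin, min_eq_right hc]
        rw [this, hκdef]
        exact le_max_right _ _
    have h6 : GammaFn g ε hmin hmax x ≤ 4*K^2 + κ := by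
      refine h3.trans (max_le (by linarith) (h5.trans (max_le ?_ ?_)))
      · nlinarith [sq_nonneg K]
      · nlinarith [sq_nonneg K]
    rw [hGdef]
    simp only
    rw [hTdef]
    exact le_min (by linarith) (by linarith)
  -- the bandwidth function and the key pointwise implication
  set wf : ℝ → ℝ := fun t => min hmax (max hmin ((ε/t) ^ ((1:ℝ)/3))) with hwfdef
  have hwmem : ∀ t : ℝ, wf t ∈ Set.Icc hmin hmax := by
    intro t
    rw [hwfdef]
    exact ⟨le_min hminmax (le_max_left _ _), min_le_left _ _⟩
  have hP3 : ∀ x ∈ Set.Icc a b, ∀ t : ℝ, 0 < t → t < G x →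
      Real.sqrt t < g (x - wf t) - g (x + wf t) := by
    intro x hx t ht hxt
    by_contra hcon
    push_neg at hcon
    have hw := hwmem t
    have hw0 : 0 < wf t := lt_of_lt_of_le hmin0 hw.1
    have h1 := gamma_le_max g a b hmax hmin ε habl hmono x hx (wf t) hw0 hw
    obtain ⟨hd0, _⟩ := hDfacts x hx (wf t) hw0 hw.2
    have hD2 : (g (x - wf t) - g (x + wf t))^2 ≤ t := by
      have := pow_le_pow_left₀ hd0 hcon 2
      rwa [Real.sq_sqrt ht.le] at this
    have hεw : ε/(wf t)^3 ≤ max t κ := by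
      rcases le_total ((ε/t) ^ ((1:ℝ)/3)) hmax with hyh | hyh
      · have hyw : (ε/t) ^ ((1:ℝ)/3) ≤ wf t := by
          rw [hwfdef]
          simp only
          exact le_min hyh (le_max_right _ _)
        have hy0 : (0:ℝ) ≤ (ε/t) ^ ((1:ℝ)/3) := Real.rpow_nonneg (by positivity) _
        have hy3 : ((ε/t) ^ ((1:ℝ)/3))^(3:ℕ) = ε/t := by
          rw [rpowpow (ε/t) (by positivity) _ 3 1 (by norm_num), pow_one]
        have h7 : ε/t ≤ (wf t)^3 := by
          rw [← hy3]
          exact pow_le_pow_left₀ hy0 hyw 3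
        have h8 : ε/(wf t)^3 ≤ t := by
          rw [div_le_iff₀ (by positivity)]
          rw [div_le_iff₀ ht] at h7
          nlinarith
        exact h8.trans (le_max_left _ _)
      · have : wf t = hmax := by
          rw [hwfdef]
          simp only
          rw [max_eq_right (hminmax.trans hyh), min_eq_left hyh]
        rw [this, ← hκdef]
        exact le_max_right _ _
    have h9 : GammaFn g ε hmin hmax x ≤ max t κ :=
      h1.trans (max_le (hD2.trans (le_max_left _ _)) hεw)
    have h10 : max t κ ≤ t + κ := max_le (by linarith) (by linarith)
    rw [hGdef] at hxt
    simp only at hxt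
    linarith
  -- measure-theoretic part
  set μ := volume.restrict (Set.Ioc a b) with hμdef
  haveI hfin : IsFiniteMeasure μ := by
    constructor
    rw [hμdef, Measure.restrict_apply_univ, Real.volume_Ioc]
    exact ENNReal.ofReal_lt_top
  have hΓint : Integrable (GammaFn g ε hmin hmax) μ := hInt.1
  have hGint : Integrable G μ := by
    rw [hGdef]
    exact hΓint.sub (integrable_const κ)
  have hGnn : 0 ≤ᵐ[μ] G := by
    filter_upwards with x
    simp only [Pi.zero_apply, hGdef]
    linarith [hΓge x]
  have hioc : ∀ x : ℝ, x ∈ Set.Ioc a b → x ∈ Set.Icc a b := fun x hx =>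
    Set.Ioc_subset_Icc_self hx
  -- integrability of increments
  have hDint : ∀ w : ℝ, 0 < w → w ≤ hmax →
      Integrable (fun x => g (x - w) - g (x + w)) μ := by
    intro w hw0 hwm
    have i1 : IntervalIntegrable (fun x => g (x - w)) volume a b := by
      apply AntitoneOn.intervalIntegrable
      intro p hp q hq hpq
      rw [Set.uIcc_of_le habl] at hp hq
      exact hmono ((hIccmem p hp w hw0 hwm).1) ((hIccmem q hq w hw0 hwm).1)
        (by linarith)
    have i2 : IntervalIntegrable (fun x => g (x + w)) volume a b := by
      apply AntitoneOn.intervalIntegrable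
      intro p hp q hq hpq
      rw [Set.uIcc_of_le habl] at hp hq
      exact hmono ((hIccmem p hp w hw0 hwm).2) ((hIccmem q hq w hw0 hwm).2)
        (by linarith)
    exact (i1.sub i2).1
  have hDle : ∀ w : ℝ, 0 < w → w ≤ hmax →
      (∫ x, (g (x - w) - g (x + w)) ∂μ) ≤ 2*w*V := by
    intro w hw0 hwm
    have := shift_integral_le g a b hmax w habl hw0 hwm hmono
    rw [intervalIntegral.integral_of_le habl] at this
    rw [hμdef]
    calc (∫ x in Set.Ioc a b, (g (x - w) - g (x + w))) ≤ 2*w*(g (a-hmax) - g (b+hmax)) := this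
      _ = 2*w*V := by rw [hV]
  set c := ε / hmin^3 with hcdef
  have hc0 : 0 < c := by positivity
  set m := min T c with hmdef
  have hm0 : 0 ≤ m := le_min hT0 hc0.le
  -- the dominating function φ
  set φ : ℝ → ℝ := fun t => if t ≤ T then
      (if t ≤ c then 2*V*ε ^ ((1:ℝ)/3) / t ^ ((5:ℝ)/6) else 2*V*hmin / t ^ ((1:ℝ)/2))
      else 0 with hφdef
  -- step 3 : measure bound
  have hstep3 : ∀ t : ℝ, t ∈ Set.Ioi (0:ℝ) →
      μ {x | t < G x} ≤ ENNReal.ofReal (φ t) := by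
    intro t ht
    rw [Set.mem_Ioi] at ht
    rcases le_or_gt t T with htT | hTt
    swap
    · have hsub : {x | t < G x} ≤ᵐ[μ] (∅ : Set ℝ) := by
        filter_upwards [ae_restrict_mem measurableSet_Ioc] with x hx hxt
        exact absurd hxt (not_lt.2 ((hGT x (hioc x hx)).trans hTt.le))
      calc μ {x | t < G x} ≤ μ ∅ := measure_mono_ae hsub
        _ = 0 := measure_empty
        _ ≤ ENNReal.ofReal (φ t) := zero_le
    · have hw := hwmem t
      have hw0 : 0 < wf t := lt_of_lt_of_le hmin0 hw.1
      have hDi := hDint (wf t) hw0 hw.2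
      have hDnn : 0 ≤ᵐ[μ] fun x => g (x - wf t) - g (x + wf t) := by
        filter_upwards [ae_restrict_mem measurableSet_Ioc] with x hx
        exact (hDfacts x (hioc x hx) (wf t) hw0 hw.2).1
      have hst : 0 < Real.sqrt t := Real.sqrt_pos.2 ht
      have hsub : {x | t < G x} ≤ᵐ[μ]
          {x | ENNReal.ofReal (Real.sqrt t) ≤ ENNReal.ofReal (g (x - wf t) - g (x + wf t))} := by
        filter_upwards [ae_restrict_mem measurableSet_Ioc] with x hx hxt
        exact ENNReal.ofReal_le_ofReal (hP3 x (hioc x hx) t ht hxt).le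
      have hmark := mul_meas_ge_le_lintegral₀
        (ENNReal.measurable_ofReal.comp_aemeasurable hDi.aemeasurable)
        (ENNReal.ofReal (Real.sqrt t))
      have hlint : (∫⁻ x, ENNReal.ofReal (g (x - wf t) - g (x + wf t)) ∂μ)
          ≤ ENNReal.ofReal (2*(wf t)*V) := by
        rw [← ofReal_integral_eq_lintegral_ofReal hDi hDnn]
        exact ENNReal.ofReal_le_ofReal (hDle (wf t) hw0 hw.2)
      have h1 : ENNReal.ofReal (Real.sqrt t) * μ {x | t < G x}
          ≤ ENNReal.ofReal (2*(wf t)*V) :=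
        le_trans (mul_le_mul_right (measure_mono_ae hsub) _) (le_trans hmark hlint)
      have h2 : μ {x | t < G x}
          ≤ ENNReal.ofReal (2*(wf t)*V) / ENNReal.ofReal (Real.sqrt t) := by
        rw [ENNReal.le_div_iff_mul_le
          (Or.inl (by simp [ENNReal.ofReal_eq_zero, not_le, hst]))
          (Or.inl ENNReal.ofReal_ne_top), mul_comm]
        exact h1
      rw [← ENNReal.ofReal_div_of_pos hst] at h2
      refine h2.trans (ENNReal.ofReal_le_ofReal ?_)
      -- real inequality : 2 (wf t) V / √t ≤ φ t
      rw [hφdef]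
      simp only [if_pos htT]
      have hts : Real.sqrt t = t ^ ((1:ℝ)/2) := Real.sqrt_eq_rpow t
      have ht12 : (0:ℝ) < t ^ ((1:ℝ)/2) := Real.rpow_pos_of_pos ht _
      rcases le_or_gt t c with htc | hct
      · rw [if_pos htc]
        have hy0 : (0:ℝ) < (ε/t) ^ ((1:ℝ)/3) := Real.rpow_pos_of_pos (by positivity) _
        have hyc : hmin ≤ (ε/t) ^ ((1:ℝ)/3) := by
          have h3 : hmin^(3:ℕ) ≤ ((ε/t) ^ ((1:ℝ)/3))^(3:ℕ) := by
            rw [rpowpow (ε/t) (by positivity) _ 3 1 (by norm_num), pow_one]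
            rw [le_div_iff₀ ht]
            rw [hcdef] at htc
            rw [le_div_iff₀ (by positivity : (0:ℝ) < hmin^3)] at htc
            nlinarith
          exact (pow_le_pow_iff_left₀ hmin0.le hy0.le (by norm_num : (3:ℕ) ≠ 0)).mp h3
        have hwy : wf t ≤ (ε/t) ^ ((1:ℝ)/3) := by
          rw [hwfdef]
          simp only
          rw [max_eq_right hyc]
          exact min_le_right _ _
        have hnum : 2*(wf t)*V ≤ 2*((ε/t) ^ ((1:ℝ)/3))*V :=
          mul_le_mul_of_nonneg_right (by linarith) hVnn
        have heq : 2*((ε/t) ^ ((1:ℝ)/3))*V / Real.sqrt t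
            = 2*V*ε ^ ((1:ℝ)/3) / t ^ ((5:ℝ)/6) := by
          rw [hts, Real.div_rpow hε.le ht.le]
          have ht13 : (0:ℝ) < t ^ ((1:ℝ)/3) := Real.rpow_pos_of_pos ht _
          have ht56 : t ^ ((1:ℝ)/3) * t ^ ((1:ℝ)/2) = t ^ ((5:ℝ)/6) := by
            rw [← Real.rpow_add ht]; norm_num
          field_simp
          rw [← ht56]
          ring
        rw [← heq]
        exact (div_le_div_iff_of_pos_right hst).2 hnum
      · rw [if_neg (not_le.2 hct)]
        have hwh : wf t = hmin := by
          rw [hwfdef]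
          simp only
          have hyc : (ε/t) ^ ((1:ℝ)/3) ≤ hmin := by
            have h3 : ((ε/t) ^ ((1:ℝ)/3))^(3:ℕ) ≤ hmin^(3:ℕ) := by
              rw [rpowpow (ε/t) (by positivity) _ 3 1 (by norm_num), pow_one]
              rw [div_le_iff₀ ht]
              rw [hcdef] at hct
              rw [div_lt_iff₀ (by positivity : (0:ℝ) < hmin^3)] at hct
              nlinarith
            exact (pow_le_pow_iff_left₀ (Real.rpow_nonneg (by positivity) _) hmin0.le
              (by norm_num : (3:ℕ) ≠ 0)).mp h3
          rw [max_eq_left hyc, min_eq_right hminmax]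
        rw [hwh, hts]
        exact le_of_eq (by ring)
  -- step 4 : lintegral comparison
  have hstep4 : (∫⁻ t in Set.Ioi (0:ℝ), μ {x | t < G x})
      ≤ ∫⁻ t in Set.Ioi (0:ℝ), ENNReal.ofReal (φ t) := by
    apply lintegral_mono_ae
    filter_upwards [ae_restrict_mem measurableSet_Ioi] with t ht
    exact hstep3 t ht
  have hmT : m ≤ T := min_le_left _ _
  -- pointwise formulas for φ on the pieces
  have hφeqA : Set.EqOn φ (fun t => 2*V*ε ^ ((1:ℝ)/3) * t ^ (-((5:ℝ)/6))) (Set.Ioc 0 m) := by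
    intro t ht
    rw [hφdef]
    simp only
    rw [if_pos (ht.2.trans (min_le_left _ _)), if_pos (ht.2.trans (min_le_right _ _)),
      Real.rpow_neg ht.1.le]
    rw [div_eq_mul_inv]
  have hφeqB : Set.EqOn φ (fun t => 2*V*hmin * t ^ (-((1:ℝ)/2))) (Set.Ioc m T) := by
    intro t ht
    have htc : ¬ t ≤ c := fun hc => absurd (le_min ht.2 hc) (not_le.2 ht.1)
    have ht0 : 0 < t := lt_of_le_of_lt hm0 ht.1
    rw [hφdef]
    simp only
    rw [if_pos ht.2, if_neg htc, Real.rpow_neg ht0.le]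
    rw [div_eq_mul_inv]
  have hφzero : Set.EqOn φ (fun _ => (0:ℝ)) (Set.Ioi T) := by
    intro t ht
    rw [hφdef]
    simp only
    rw [if_neg (not_le.2 ht)]
  -- integrability of φ
  have hintA : IntegrableOn (fun t : ℝ => 2*V*ε ^ ((1:ℝ)/3) * t ^ (-((5:ℝ)/6)))
      (Set.Ioc (0:ℝ) m) volume :=
    ((intervalIntegral.intervalIntegrable_rpow'
      (by norm_num : (-1:ℝ) < -((5:ℝ)/6))).const_mul (2*V*ε ^ ((1:ℝ)/3))).1
  have hintB : IntegrableOn (fun t : ℝ => 2*V*hmin * t ^ (-((1:ℝ)/2)))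
      (Set.Ioc m T) volume :=
    ((intervalIntegral.intervalIntegrable_rpow'
      (by norm_num : (-1:ℝ) < -((1:ℝ)/2))).const_mul (2*V*hmin)).1
  have hφintA : IntegrableOn φ (Set.Ioc (0:ℝ) m) volume :=
    hintA.congr_fun (fun t ht => (hφeqA ht).symm) measurableSet_Ioc
  have hφintB : IntegrableOn φ (Set.Ioc m T) volume :=
    hintB.congr_fun (fun t ht => (hφeqB ht).symm) measurableSet_Ioc
  have hdisj1 : Disjoint (Set.Ioc (0:ℝ) m) (Set.Ioc m T) := by
    rw [Set.disjoint_left]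
    rintro x ⟨_, h2⟩ ⟨h3, _⟩
    exact absurd h3 (not_lt.2 h2)
  have hφintIoc : IntegrableOn φ (Set.Ioc (0:ℝ) T) volume := by
    rw [← Set.Ioc_union_Ioc_eq_Ioc hm0 hmT]
    exact hφintA.union hφintB
  have hdisj2 : Disjoint (Set.Ioc (0:ℝ) T) (Set.Ioi T) := Set.Ioc_disjoint_Ioi le_rfl
  have hφintIoi : IntegrableOn φ (Set.Ioi (0:ℝ)) volume := by
    rw [← Set.Ioc_union_Ioi_eq_Ioi hT0]
    exact hφintIoc.union
      (integrableOn_zero.congr_fun (fun t ht => (hφzero ht).symm) measurableSet_Ioi)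
  have hφnn : 0 ≤ᵐ[volume.restrict (Set.Ioi (0:ℝ))] φ := by
    filter_upwards [ae_restrict_mem measurableSet_Ioi] with t ht
    have ht0 : (0:ℝ) < t := ht
    rw [hφdef]
    simp only
    split_ifs with h1 h2
    · exact div_nonneg (mul_nonneg (mul_nonneg (by norm_num) hVnn)
        (Real.rpow_nonneg hε.le _)) (Real.rpow_nonneg ht0.le _)
    · exact div_nonneg (mul_nonneg (mul_nonneg (by norm_num) hVnn) hmin0.le)
        (Real.rpow_nonneg ht0.le _)
    · exact le_refl 0
  -- value of the integral of φ
  have hval : (∫ t in Set.Ioi (0:ℝ), φ t)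
      = 12*V*ε ^ ((1:ℝ)/3)*m ^ ((1:ℝ)/6) + 4*V*hmin*(T ^ ((1:ℝ)/2) - m ^ ((1:ℝ)/2)) := by
    have hsplit1 : (∫ t in Set.Ioi (0:ℝ), φ t)
        = (∫ t in Set.Ioc (0:ℝ) T, φ t) + ∫ t in Set.Ioi T, φ t := by
      rw [← setIntegral_union hdisj2 measurableSet_Ioi hφintIoc
        (integrableOn_zero.congr_fun (fun t ht => (hφzero ht).symm) measurableSet_Ioi),
        Set.Ioc_union_Ioi_eq_Ioi hT0]
    have hzero2 : (∫ t in Set.Ioi T, φ t) = 0 := by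
      rw [setIntegral_congr_fun measurableSet_Ioi hφzero]
      simp
    have hsplit2 : (∫ t in Set.Ioc (0:ℝ) T, φ t)
        = (∫ t in Set.Ioc (0:ℝ) m, φ t) + ∫ t in Set.Ioc m T, φ t := by
      rw [← setIntegral_union hdisj1 measurableSet_Ioc hφintA hφintB,
        Set.Ioc_union_Ioc_eq_Ioc hm0 hmT]
    have hA : (∫ t in Set.Ioc (0:ℝ) m, φ t) = 12*V*ε ^ ((1:ℝ)/3)*m ^ ((1:ℝ)/6) := by
      rw [setIntegral_congr_fun measurableSet_Ioc hφeqA,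
        ← intervalIntegral.integral_of_le hm0, intervalIntegral.integral_const_mul,
        integral_rpow (Or.inl (by norm_num : (-1:ℝ) < -((5:ℝ)/6)))]
      rw [show (-((5:ℝ)/6) + 1) = 1/6 by norm_num,
        Real.zero_rpow (by norm_num : (1:ℝ)/6 ≠ 0)]
      field_simp
      ring
    have hB : (∫ t in Set.Ioc m T, φ t) = 4*V*hmin*(T ^ ((1:ℝ)/2) - m ^ ((1:ℝ)/2)) := by
      rw [setIntegral_congr_fun measurableSet_Ioc hφeqB,
        ← intervalIntegral.integral_of_le hmT, intervalIntegral.integral_const_mul,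
        integral_rpow (Or.inl (by norm_num : (-1:ℝ) < -((1:ℝ)/2)))]
      rw [show (-((1:ℝ)/2) + 1) = 1/2 by norm_num]
      field_simp
      ring
    rw [hsplit1, hzero2, hsplit2, hA, hB]
    ring
  -- core bound
  have hcore : (∫ x, G x ∂μ) ≤ 16*V*(min E1 E2) := by
    have s1 : (∫ x, G x ∂μ) = (∫⁻ x, ENNReal.ofReal (G x) ∂μ).toReal :=
      integral_eq_lintegral_of_nonneg_ae hGnn hGint.1
    have s2 : (∫⁻ x, ENNReal.ofReal (G x) ∂μ)
        = ∫⁻ t in Set.Ioi (0:ℝ), μ {x | t < G x} :=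
      lintegral_eq_lintegral_meas_lt μ hGnn hGint.aemeasurable
    have s5 : (∫⁻ t in Set.Ioi (0:ℝ), ENNReal.ofReal (φ t))
        = ENNReal.ofReal (∫ t in Set.Ioi (0:ℝ), φ t) :=
      (ofReal_integral_eq_lintegral_ofReal hφintIoi hφnn).symm
    have hJnn : 0 ≤ ∫ t in Set.Ioi (0:ℝ), φ t := integral_nonneg_of_ae hφnn
    have hle : (∫⁻ x, ENNReal.ofReal (G x) ∂μ)
        ≤ ENNReal.ofReal (∫ t in Set.Ioi (0:ℝ), φ t) := by
      rw [s2, ← s5]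
      exact hstep4
    have s7 : (∫ x, G x ∂μ) ≤ ∫ t in Set.Ioi (0:ℝ), φ t := by
      rw [s1]
      calc (∫⁻ x, ENNReal.ofReal (G x) ∂μ).toReal
          ≤ (ENNReal.ofReal (∫ t in Set.Ioi (0:ℝ), φ t)).toReal :=
            ENNReal.toReal_mono ENNReal.ofReal_ne_top hle
        _ = ∫ t in Set.Ioi (0:ℝ), φ t := ENNReal.toReal_ofReal hJnn
    refine s7.trans ?_
    rw [hval]
    have hfinal := final_algebra ε hmin ρ K V E1 E2 hε hmin0 hρpos hminρ hK0 hK2 hVnn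
      hE1def hE2eq
    rw [hmdef, hTdef, hcdef]
    exact hfinal
  -- final assembly
  have hABident : (∫ x in a..b, GammaFn g ε hmin hmax x) = (∫ x, G x ∂μ) + (b-a)*κ := by
    rw [intervalIntegral.integral_of_le habl]
    have e1 : (∫ x in Set.Ioc a b, GammaFn g ε hmin hmax x) = ∫ x, (G x + κ) ∂μ := by
      rw [hμdef]
      congr 1
      funext x
      rw [hGdef]
      simp
    rw [e1, integral_add hGint (integrable_const κ), integral_const,
      hμdef, measureReal_restrict_apply_univ, measureReal_def, Real.volume_Ioc,
      ENNReal.toReal_ofReal (by linarith : (0:ℝ) ≤ b - a), smul_eq_mul]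
  rw [hABident]
  have h18 : 16*V*(min E1 E2) ≤ 18*V*(min E1 E2) := by
    nlinarith [mul_nonneg hVnn (le_min hE1nn hE2nn)]
  calc (∫ x, G x ∂μ) + (b-a)*κ ≤ 16*V*(min E1 E2) + (b-a)*κ := by linarith [hcore]
    _ ≤ 18*V*(min E1 E2) + (b-a)*κ := by linarith
    _ = 18 * V * min E1 E2 + (b - a) * ε / hmax ^ 3 := by rw [hκdef]; ring
end

section
/- Let β ∈ [1,2] and L > 0, and let f₀ be a continuous log-concave density on ℝ whose score function ψ₀ satisfies |ψ₀(x) − ψ₀(y)| ≤ L|x−y|^{β−1} for all x,y ∈ ℝ. Then the Fisher information satisfies i(f₀) := ∫ ψ₀² f₀ ≤ 8·L^{2/β}. -/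
open MeasureTheory Real Set Filter Topology

open MeasureTheory Real Set Filter Topology

/-- For a concave function, the right derivative at the left endpoint of a chord
dominates the chord slope. -/
lemma slope_le_rderiv {φ : ℝ → ℝ} {S : Set ℝ} (hφ : ConcaveOn ℝ S φ) {x y d : ℝ}
    (hx : x ∈ S) (hy : y ∈ S) (hxy : x < y)
    (hd : HasDerivWithinAt φ d (Set.Ici x) x) :
    φ y - φ x ≤ d * (y - x) := by
  have hconv : ConvexOn ℝ S (-φ) := hφ.neg
  have hT : Tendsto (slope φ x) (𝓝[>] x) (𝓝 d) := by
    have := hasDerivWithinAt_iff_tendsto_slope.1 hd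
    rwa [show Set.Ici x \ {x} = Set.Ioi x by
      ext z; simp [Set.mem_diff, lt_iff_le_and_ne, eq_comm, and_comm]] at this
  have hev : ∀ᶠ z in 𝓝[>] x, slope φ x y ≤ slope φ x z := by
    filter_upwards [Ioo_mem_nhdsGT_of_mem (Set.left_mem_Ico.2 hxy)] with z hz
    have hzS : z ∈ S := hφ.1.ordConnected.out hx hy ⟨hz.1.le, hz.2.le⟩
    have := hconv.secant_mono hx hzS hy (ne_of_gt hz.1) (ne_of_gt hxy) hz.2.le
    simp only [Pi.neg_apply] at this
    rw [slope_def_field, slope_def_field]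
    have h1 : (-φ z - -φ x) / (z - x) ≤ (-φ y - -φ x) / (y - x) := this
    have h2 : -((φ z - φ x) / (z - x)) ≤ -((φ y - φ x) / (y - x)) := by
      rw [neg_div', neg_div']; exact le_of_eq_of_le (by ring_nf) (le_of_le_of_eq h1 (by ring_nf))
    linarith
  have hle : slope φ x y ≤ d := ge_of_tendsto hT hev
  rw [slope_def_field, div_le_iff₀ (by linarith)] at hle
  linarith

/-- For a concave function, the right derivative at the right endpoint of a chord
is dominated by the chord slope (provided the domain contains points to the right). -/
lemma rderiv_le_slope {φ : ℝ → ℝ} {S : Set ℝ} (hφ : ConcaveOn ℝ S φ) {x y d : ℝ}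
    (hx : x ∈ S) (hy : y ∈ S) (hxy : x < y)
    (hd : HasDerivWithinAt φ d (Set.Ici y) y)
    (hS : ∀ᶠ z in 𝓝[>] y, z ∈ S) :
    d * (y - x) ≤ φ y - φ x := by
  have hT : Tendsto (slope φ y) (𝓝[>] y) (𝓝 d) := by
    have := hasDerivWithinAt_iff_tendsto_slope.1 hd
    rwa [show Set.Ici y \ {y} = Set.Ioi y by
      ext z; simp [Set.mem_diff, lt_iff_le_and_ne, eq_comm, and_comm]] at this
  have hev : ∀ᶠ z in 𝓝[>] y, slope φ y z ≤ slope φ x y := by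
    filter_upwards [hS, self_mem_nhdsWithin] with z hzS hz
    have := hφ.slope_anti_adjacent hx hzS hxy hz
    rw [slope_def_field, slope_def_field]
    exact this
  have hle : d ≤ slope φ x y := le_of_tendsto hT hev
  rw [slope_def_field, le_div_iff₀ (by linarith)] at hle
  linarith


lemma fisher_right_side (h m : ℝ) (hh : 0 < h) (f ψ : ℝ → ℝ)
    (hfpos : ∀ x, 0 < f x) (hfc : Continuous f) (hfi : Integrable f volume)
    (hanti : Antitone ψ)
    (hftc : ∀ x y : ℝ, x ≤ y → ∫ t in x..y, ψ t * f t = f y - f x)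
    (hneg : ∀ x, m < x → ψ x ≤ 0)
    (hinc : ∀ x : ℝ, ψ x - ψ (x + h) ≤ 1 / h)
    (hψmh : -(1/h) ≤ ψ (m + h))
    (hfm : f m ≤ Real.exp 1 / (2*h))
    (hI : IntegrableOn (fun x => (ψ x)^2 * f x) (Set.Ioi m) volume) :
    ∫ x in Set.Ioi m, (ψ x)^2 * f x ≤
      Real.exp 1 / (2*h^2) + (1/h^2) * ∫ x in Set.Ioi m, f x := by
  -- ψ * f is interval integrable
  have hψf_int : ∀ a b : ℝ, IntervalIntegrable (fun t => ψ t * f t) volume a b :=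
    fun a b => (hanti.intervalIntegrable).mul_continuousOn hfc.continuousOn
  -- f is nonincreasing to the right of m
  have fdec : ∀ x y : ℝ, m ≤ x → x ≤ y → f y ≤ f x := by
    intro x y hmx hxy
    have h1 : ∫ t in x..y, ψ t * f t ≤ 0 := by
      rw [intervalIntegral.integral_of_le hxy]
      apply setIntegral_nonpos_of_ae_restrict
      rw [Filter.EventuallyLE, ae_restrict_iff' measurableSet_Ioc]
      filter_upwards with t ht
      exact mul_nonpos_of_nonpos_of_nonneg (hneg t (lt_of_le_of_lt hmx ht.1)) (hfpos t).le
    have h2 := hftc x y hxy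
    linarith [h2 ▸ h1]
  -- the block estimate
  have block : ∀ a b : ℝ, m ≤ a → a < b →
      ∫ t in a..b, (ψ t)^2 * f t ≤ (-ψ b) * (f a - f b) := by
    intro a b hma hab
    have key : ∫ t in a..b, (ψ t)^2 * f t ≤ ∫ t in a..b, (-ψ b) * (-(ψ t * f t)) := by
      rw [intervalIntegral.integral_of_le hab.le, intervalIntegral.integral_of_le hab.le]
      apply setIntegral_mono_on
      · exact hI.mono_set (fun t ht => lt_of_le_of_lt hma ht.1)
      · exact ((hψf_int a b).1.neg.const_mul _ : _)
      · exact measurableSet_Ioc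
      · intro t ht
        have htm : m < t := lt_of_le_of_lt hma ht.1
        have h1 : ψ t ≤ 0 := hneg t htm
        have h2 : ψ b ≤ ψ t := hanti ht.2
        have h5 : 0 ≤ -(ψ t * f t) := by
          rw [neg_mul_eq_neg_mul]; exact mul_nonneg (by linarith) (hfpos t).le
        calc (ψ t)^2 * f t = (-ψ t) * (-(ψ t * f t)) := by ring
        _ ≤ (-ψ b) * (-(ψ t * f t)) := mul_le_mul_of_nonneg_right (by linarith) h5
    calc ∫ t in a..b, (ψ t)^2 * f t ≤ ∫ t in a..b, (-ψ b) * (-(ψ t * f t)) := key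
    _ = (-ψ b) * (-(∫ t in a..b, ψ t * f t)) := by
        rw [← intervalIntegral.integral_neg, ← intervalIntegral.integral_const_mul]
    _ = (-ψ b) * (f a - f b) := by rw [hftc a b hab.le]; ring
  -- interval integrability of ψ^2 f on blocks right of m
  have hsq_int : ∀ a b : ℝ, m ≤ a → a ≤ b →
      IntervalIntegrable (fun t => (ψ t)^2 * f t) volume a b := by
    intro a b hma hab
    rw [intervalIntegrable_iff_integrableOn_Ioc_of_le hab]
    exact hI.mono_set (fun t ht => lt_of_le_of_lt hma ht.1)
  -- the induction
  have main : ∀ N : ℕ, ∫ t in m..(m+(N+1)*h), (ψ t)^2 * f t ≤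
      (-ψ (m+h)) * f m + (1/h^2) * (∫ t in m..(m+N*h), f t)
        + ψ (m+(N+1)*h) * f (m+(N+1)*h) := by
    intro N
    induction N with
    | zero =>
      simp only [Nat.cast_zero, zero_add, one_mul, zero_mul, add_zero,
        intervalIntegral.integral_same, mul_zero]
      have hb := block m (m+h) le_rfl (by linarith)
      linarith
    | succ N ih =>
      push_cast
      push_cast at ih
      have hNh : (0:ℝ) ≤ (N:ℝ)*h := by positivity
      set a := m + ((N:ℝ)+1)*h with ha_def
      have hma : m ≤ a := by rw [ha_def]; nlinarith
      have hrw : m + ((N:ℝ)+1+1)*h = a + h := by rw [ha_def]; ring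
      rw [hrw]
      have hsplit : (∫ t in m..(a+h), (ψ t)^2 * f t)
          = (∫ t in m..a, (ψ t)^2 * f t) + ∫ t in a..(a+h), (ψ t)^2 * f t :=
        (intervalIntegral.integral_add_adjacent_intervals (hsq_int m a le_rfl hma)
          (hsq_int a (a+h) hma (by linarith))).symm
      have hblk := block a (a+h) hma (by linarith)
      have hinc' := hinc a
      have hfa : h * f a ≤ ∫ t in (m+(N:ℝ)*h)..a, f t := by
        have hle : m + (N:ℝ)*h ≤ a := by rw [ha_def]; nlinarith
        have hmono : ∫ t in (m+(N:ℝ)*h)..a, f a ≤ ∫ t in (m+(N:ℝ)*h)..a, f t := by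
          apply intervalIntegral.integral_mono_on hle intervalIntegrable_const
            (hfc.intervalIntegrable _ _)
          intro t ht
          exact fdec t a (by linarith [ht.1]) ht.2
        rw [intervalIntegral.integral_const, smul_eq_mul] at hmono
        have : (a - (m + (N:ℝ)*h)) = h := by rw [ha_def]; ring
        rw [this] at hmono
        exact hmono
      have hfsplit : ∫ t in m..a, f t
          = (∫ t in m..(m+(N:ℝ)*h), f t) + ∫ t in (m+(N:ℝ)*h)..a, f t :=
        (intervalIntegral.integral_add_adjacent_intervals (hfc.intervalIntegrable _ _)
          (hfc.intervalIntegrable _ _)).symm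
      have hψah : ψ (a+h) ≤ 0 := hneg _ (by linarith)
      have t1 : f a * (ψ a - ψ (a+h)) ≤ f a * (1/h) :=
        mul_le_mul_of_nonneg_left hinc' (hfpos a).le
      have t4 : f a * (1/h) ≤ (1/h^2) * ∫ t in (m+(N:ℝ)*h)..a, f t := by
        have t5 := mul_le_mul_of_nonneg_left hfa (by positivity : (0:ℝ) ≤ 1/h^2)
        calc f a * (1/h) = (1/h^2) * (h * f a) := by field_simp
        _ ≤ (1/h^2) * ∫ t in (m+(N:ℝ)*h)..a, f t := t5
      have e1 : (-ψ (a+h)) * (f a - f (a+h))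
          = f a * (ψ a - ψ (a+h)) + ψ (a+h) * f (a+h) - ψ a * f a := by ring
      have e2 : (1/h^2) * (∫ t in m..a, f t)
          = (1/h^2) * (∫ t in m..(m+(N:ℝ)*h), f t)
            + (1/h^2) * ∫ t in (m+(N:ℝ)*h)..a, f t := by rw [hfsplit]; ring
      linarith
  -- conclude by taking limits
  have hC : ∀ N : ℕ, ∫ t in m..(m+((N:ℝ)+1)*h), (ψ t)^2 * f t
      ≤ Real.exp 1/(2*h^2) + (1/h^2) * ∫ x in Ioi m, f x := by
    intro N
    have h1 := main N
    have hψ1 : ψ (m+h) ≤ 0 := hneg _ (by linarith)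
    have h2 : (-ψ (m+h)) * f m ≤ (1/h) * (Real.exp 1/(2*h)) :=
      mul_le_mul (by linarith) hfm (hfpos m).le (by positivity)
    have hNh : (0:ℝ) ≤ (N:ℝ)*h := by positivity
    have h3 : ∫ t in m..(m+(N:ℝ)*h), f t ≤ ∫ x in Ioi m, f x := by
      rw [intervalIntegral.integral_of_le (by linarith : m ≤ m + (N:ℝ)*h)]
      apply setIntegral_mono_set hfi.integrableOn
      · filter_upwards with x
        exact (hfpos x).le
      · exact (Ioc_subset_Ioi_self).eventuallyLE
    have h4 : ψ (m+((N:ℝ)+1)*h) * f (m+((N:ℝ)+1)*h) ≤ 0 :=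
      mul_nonpos_of_nonpos_of_nonneg (hneg _ (by nlinarith)) (hfpos _).le
    have h5 : (1/h) * (Real.exp 1/(2*h)) = Real.exp 1/(2*h^2) := by
      field_simp
    have h6 := mul_le_mul_of_nonneg_left h3 (by positivity : (0:ℝ) ≤ 1/h^2)
    linarith
  have hT : Tendsto (fun N : ℕ => ∫ t in m..(m+((N:ℝ)+1)*h), (ψ t)^2 * f t) atTop
      (𝓝 (∫ x in Ioi m, (ψ x)^2 * f x)) := by
    apply intervalIntegral_tendsto_integral_Ioi m hI
    have t1 : Tendsto (fun N : ℕ => (N:ℝ)) atTop atTop := tendsto_natCast_atTop_atTop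
    have t2 := tendsto_atTop_add_const_right atTop (1:ℝ) t1
    have t3 := t2.atTop_mul_const hh
    exact tendsto_atTop_add_const_left atTop m t3
  exact le_of_tendsto hT (Filter.Eventually.of_forall hC)

set_option maxHeartbeats 1000000 in
/-- If `f₀` is a continuous log-concave density on `ℝ` whose score `ψ₀` (right derivative of
`log f₀`) is `(β−1, L)`-Hölder with `β ∈ [1,2]`, then the Fisher information satisfies
`i(f₀) = ∫ ψ₀² f₀ ≤ 8 L^{2/β}`. -/
theorem fisher_information_holder_bound
    (β L : ℝ) (hβ : β ∈ Set.Icc (1:ℝ) 2) (hL : 0 < L)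
    (f₀ : ℝ → ℝ) (hcont : Continuous f₀)
    (hf_nonneg : ∀ x, 0 ≤ f₀ x) (hf_int : Integrable f₀ volume) (hf_mass : ∫ x, f₀ x = 1)
    (hlogconc : ∀ x y : ℝ, ∀ t ∈ Set.Icc (0:ℝ) 1,
      f₀ x ^ t * f₀ y ^ (1 - t) ≤ f₀ (t * x + (1 - t) * y))
    (ψ₀ : ℝ → ℝ)
    (hψ : ∀ x : ℝ, 0 < f₀ x →
      HasDerivWithinAt (fun t => Real.log (f₀ t)) (ψ₀ x) (Set.Ici x) x)
    (hholder : ∀ x y : ℝ, |ψ₀ x - ψ₀ y| ≤ L * |x - y| ^ (β - 1)) :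
    ∫ x, (ψ₀ x)^2 * f₀ x ≤ 8 * L ^ (2 / β) := by
  obtain ⟨hβ1, hβ2⟩ := hβ
  have hβ0 : (0:ℝ) < β := by linarith
  have hβ1' : (0:ℝ) ≤ β - 1 := by linarith
  -- trivial case: non-integrable
  by_cases hInt : Integrable (fun x => (ψ₀ x)^2 * f₀ x) volume
  swap
  · rw [integral_undef hInt]
    positivity
  -- somewhere f₀ is positive
  have hx₀ : ∃ x₀, 0 < f₀ x₀ := by
    by_contra hc
    push_neg at hc
    have hz : ∀ x, f₀ x = 0 := fun x => le_antisymm (hc x) (hf_nonneg x)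
    rw [show f₀ = (fun _ => (0:ℝ)) from funext hz] at hf_mass
    simp at hf_mass
  obtain ⟨x₀, hx₀⟩ := hx₀
  -- log-concavity on sets where f₀ is positive
  have conc_on : ∀ S : Set ℝ, Convex ℝ S → (∀ x ∈ S, 0 < f₀ x) →
      ConcaveOn ℝ S (fun x => Real.log (f₀ x)) := by
    intro S hS hpos
    refine ⟨hS, ?_⟩
    intro x hx y hy a b ha hb hab
    have hb' : b = 1 - a := by linarith
    subst hb'
    have h1 := hlogconc x y a ⟨ha, by linarith⟩
    have hfx := hpos x hx
    have hfy := hpos y hy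
    have h2 : Real.log (f₀ x ^ a * f₀ y ^ (1-a)) ≤ Real.log (f₀ (a*x + (1-a)*y)) :=
      Real.log_le_log (by positivity) h1
    rw [Real.log_mul (by positivity) (by positivity), Real.log_rpow hfx,
      Real.log_rpow hfy] at h2
    simpa [smul_eq_mul] using h2
  -- positivity of f₀ everywhere
  have hfpos : ∀ x, 0 < f₀ x := by
    intro y
    rcases lt_trichotomy x₀ y with hy | hy | hy
    · -- y to the right of x₀
      by_contra hc
      have hfy0 : f₀ y = 0 := le_antisymm (not_lt.1 hc) (hf_nonneg y)
      set T := {z ∈ Icc x₀ y | f₀ z = 0} with hT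
      have hTne : T.Nonempty := ⟨y, ⟨⟨hy.le, le_rfl⟩, hfy0⟩⟩
      have hTbdd : BddBelow T := ⟨x₀, fun z hz => hz.1.1⟩
      have hTclosed : IsClosed T := by
        have : T = Icc x₀ y ∩ f₀ ⁻¹' {0} := by ext z; simp [hT]
        rw [this]
        exact isClosed_Icc.inter (isClosed_singleton.preimage hcont)
      set b := sInf T with hb
      have hbT : b ∈ T := hTclosed.csInf_mem hTne hTbdd
      have hfb : f₀ b = 0 := hbT.2
      have hbx : x₀ < b := by
        rcases eq_or_lt_of_le hbT.1.1 with he | hlt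
        · exfalso; rw [← he] at hfb; linarith
        · exact hlt
      have hSpos : ∀ z ∈ Ico x₀ b, 0 < f₀ z := by
        intro z hz
        rcases (hf_nonneg z).lt_or_eq with hp | hp
        · exact hp
        · exfalso
          have hzT : z ∈ T := ⟨⟨hz.1, le_trans hz.2.le hbT.1.2⟩, hp.symm⟩
          have := csInf_le hTbdd hzT
          rw [← hb] at this
          linarith [hz.2]
      have hconc := conc_on (Ico x₀ b) (convex_Ico _ _) hSpos
      set M := |ψ₀ x₀| + L * (b - x₀)^(β-1) with hM
      have hM0 : 0 ≤ M :=
        add_nonneg (abs_nonneg _) (mul_nonneg hL.le (Real.rpow_nonneg (by linarith) _))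
      have hψbd : ∀ z ∈ Ico x₀ b, -M ≤ ψ₀ z := by
        intro z hz
        have h1 := hholder z x₀
        have h2 : |z - x₀| ^ (β-1) ≤ (b - x₀)^(β-1) := by
          apply Real.rpow_le_rpow (abs_nonneg _) ?_ hβ1'
          rw [abs_of_nonneg (by linarith [hz.1])]
          linarith [hz.2]
        have h3 := mul_le_mul_of_nonneg_left h2 hL.le
        have h4 := neg_abs_le (ψ₀ z - ψ₀ x₀)
        have h5 := neg_abs_le (ψ₀ x₀)
        simp only [hM]
        nlinarith
      have hlow : ∀ z ∈ Ico x₀ b,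
          Real.log (f₀ x₀) - M * (b - x₀) ≤ Real.log (f₀ z) := by
        intro z hz
        rcases eq_or_lt_of_le hz.1 with he | hlt
        · rw [← he]; nlinarith
        · have hd := hψ z (hSpos z hz)
          have hev : ∀ᶠ w in 𝓝[>] z, w ∈ Ico x₀ b := by
            filter_upwards [Ioo_mem_nhdsGT_of_mem (Set.left_mem_Ico.2 hz.2)] with w hw
            exact ⟨by linarith [hz.1, hw.1], hw.2⟩
          have h2 := rderiv_le_slope hconc ⟨le_rfl, hbx⟩ hz hlt hd hev
          have h3 := hψbd z hz
          nlinarith [hz.2, sub_nonneg.2 hz.1]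
      have htend : Tendsto f₀ (𝓝[<] b) (𝓝 (f₀ b)) :=
        (hcont.tendsto b).mono_left nhdsWithin_le_nhds
      have hev2 : ∀ᶠ z in 𝓝[<] b,
          Real.exp (Real.log (f₀ x₀) - M * (b - x₀)) ≤ f₀ z := by
        filter_upwards [Ioo_mem_nhdsLT_of_mem (Set.right_mem_Ioc.2 hbx)] with z hz
        have hzm : z ∈ Ico x₀ b := ⟨hz.1.le, hz.2⟩
        calc Real.exp (Real.log (f₀ x₀) - M * (b - x₀))
            ≤ Real.exp (Real.log (f₀ z)) := Real.exp_le_exp.2 (hlow z hzm)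
        _ = f₀ z := Real.exp_log (hSpos z hzm)
      have hle := ge_of_tendsto htend hev2
      rw [hfb] at hle
      linarith [Real.exp_pos (Real.log (f₀ x₀) - M * (b - x₀))]
    · rw [← hy]; exact hx₀
    · -- y to the left of x₀
      by_contra hc
      have hfy0 : f₀ y = 0 := le_antisymm (not_lt.1 hc) (hf_nonneg y)
      set T := {z ∈ Icc y x₀ | f₀ z = 0} with hT
      have hTne : T.Nonempty := ⟨y, ⟨⟨le_rfl, hy.le⟩, hfy0⟩⟩
      have hTbdd : BddAbove T := ⟨x₀, fun z hz => hz.1.2⟩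
      have hTclosed : IsClosed T := by
        have : T = Icc y x₀ ∩ f₀ ⁻¹' {0} := by ext z; simp [hT]
        rw [this]
        exact isClosed_Icc.inter (isClosed_singleton.preimage hcont)
      set b := sSup T with hb
      have hbT : b ∈ T := hTclosed.csSup_mem hTne hTbdd
      have hfb : f₀ b = 0 := hbT.2
      have hbx : b < x₀ := by
        rcases eq_or_lt_of_le hbT.1.2 with he | hlt
        · exfalso; rw [he] at hfb; linarith
        · exact hlt
      have hSpos : ∀ z ∈ Ioc b x₀, 0 < f₀ z := by
        intro z hz
        rcases (hf_nonneg z).lt_or_eq with hp | hp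
        · exact hp
        · exfalso
          have hzT : z ∈ T := ⟨⟨le_trans hbT.1.1 hz.1.le, hz.2⟩, hp.symm⟩
          have := le_csSup hTbdd hzT
          rw [← hb] at this
          linarith [hz.1]
      have hconc := conc_on (Ioc b x₀) (convex_Ioc _ _) hSpos
      set M := |ψ₀ x₀| + L * (x₀ - b)^(β-1) with hM
      have hM0 : 0 ≤ M :=
        add_nonneg (abs_nonneg _) (mul_nonneg hL.le (Real.rpow_nonneg (by linarith) _))
      have hψbd : ∀ z ∈ Ioc b x₀, ψ₀ z ≤ M := by
        intro z hz
        have h1 := hholder z x₀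
        have h2 : |z - x₀| ^ (β-1) ≤ (x₀ - b)^(β-1) := by
          apply Real.rpow_le_rpow (abs_nonneg _) ?_ hβ1'
          rw [abs_of_nonpos (by linarith [hz.2])]
          linarith [hz.1]
        have h3 := mul_le_mul_of_nonneg_left h2 hL.le
        have h4 := le_abs_self (ψ₀ z - ψ₀ x₀)
        have h5 := le_abs_self (ψ₀ x₀)
        simp only [hM]
        nlinarith
      have hlow : ∀ z ∈ Ioc b x₀,
          Real.log (f₀ x₀) - M * (x₀ - b) ≤ Real.log (f₀ z) := by
        intro z hz
        rcases eq_or_lt_of_le hz.2 with he | hlt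
        · rw [he]; nlinarith
        · have hd := hψ z (hSpos z hz)
          have h2 := slope_le_rderiv hconc hz ⟨hbx, le_rfl⟩ hlt hd
          have h3 := hψbd z hz
          nlinarith [hz.1, sub_nonneg.2 hz.2]
      have htend : Tendsto f₀ (𝓝[>] b) (𝓝 (f₀ b)) :=
        (hcont.tendsto b).mono_left nhdsWithin_le_nhds
      have hev2 : ∀ᶠ z in 𝓝[>] b,
          Real.exp (Real.log (f₀ x₀) - M * (x₀ - b)) ≤ f₀ z := by
        filter_upwards [Ioo_mem_nhdsGT_of_mem (Set.left_mem_Ico.2 hbx)] with z hz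
        have hzm : z ∈ Ioc b x₀ := ⟨hz.1, hz.2.le⟩
        calc Real.exp (Real.log (f₀ x₀) - M * (x₀ - b))
            ≤ Real.exp (Real.log (f₀ z)) := Real.exp_le_exp.2 (hlow z hzm)
        _ = f₀ z := Real.exp_log (hSpos z hzm)
      have hle := ge_of_tendsto htend hev2
      rw [hfb] at hle
      linarith [Real.exp_pos (Real.log (f₀ x₀) - M * (x₀ - b))]
  -- global concavity and antitonicity
  have hconcU : ConcaveOn ℝ univ (fun x => Real.log (f₀ x)) :=
    conc_on univ convex_univ (fun x _ => hfpos x)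
  have hanti : Antitone ψ₀ := by
    intro x y hxy
    rcases eq_or_lt_of_le hxy with he | hlt
    · rw [he]
    · have h1 := slope_le_rderiv hconcU (mem_univ x) (mem_univ y) hlt (hψ x (hfpos x))
      have h2 := rderiv_le_slope hconcU (mem_univ x) (mem_univ y) hlt (hψ y (hfpos y))
        (by filter_upwards with z using mem_univ z)
      nlinarith
  -- derivative of f₀ itself
  have hf' : ∀ x, HasDerivWithinAt f₀ (ψ₀ x * f₀ x) (Set.Ici x) x := by
    intro x
    have h1 := (hψ x (hfpos x)).exp
    have h2 : (fun t => Real.exp (Real.log (f₀ t))) = f₀ :=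
      funext fun t => Real.exp_log (hfpos t)
    rw [h2, Real.exp_log (hfpos x)] at h1
    convert h1 using 1
    ring
  have hψ_ii : ∀ a b : ℝ, IntervalIntegrable ψ₀ volume a b :=
    fun a b => hanti.intervalIntegrable
  -- fundamental theorem of calculus for f₀ and log f₀
  have FTC1 : ∀ x y : ℝ, x ≤ y → ∫ t in x..y, ψ₀ t * f₀ t = f₀ y - f₀ x := by
    intro x y hxy
    apply intervalIntegral.integral_eq_sub_of_hasDeriv_right_of_le hxy hcont.continuousOn
    · intro t _
      exact (hf' t).mono Ioi_subset_Ici_self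
    · exact (hψ_ii x y).mul_continuousOn hcont.continuousOn
  have FTClog : ∀ x y : ℝ, x ≤ y →
      ∫ t in x..y, ψ₀ t = Real.log (f₀ y) - Real.log (f₀ x) := by
    intro x y hxy
    apply intervalIntegral.integral_eq_sub_of_hasDeriv_right_of_le hxy
      (hcont.continuousOn.log (fun t _ => (hfpos t).ne'))
    · intro t _
      exact (hψ t (hfpos t)).mono Ioi_subset_Ici_self
    · exact hψ_ii x y
  -- the score takes both signs
  have hex_neg : ∃ y, ψ₀ y < 0 := by
    by_contra hc
    push_neg at hc
    have hmono : ∀ x y : ℝ, x ≤ y → f₀ x ≤ f₀ y := by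
      intro x y hxy
      have h1 : 0 ≤ ∫ t in x..y, ψ₀ t * f₀ t :=
        intervalIntegral.integral_nonneg hxy (fun t _ => mul_nonneg (hc t) (hf_nonneg t))
      have h2 := FTC1 x y hxy
      linarith
    have hn : ∀ n : ℕ, (n:ℝ) * f₀ 0 ≤ 1 := by
      intro n
      have h1 : ∫ t in (0:ℝ)..(n:ℝ), f₀ 0 ≤ ∫ t in (0:ℝ)..(n:ℝ), f₀ t := by
        apply intervalIntegral.integral_mono_on (by positivity) intervalIntegrable_const
          (hcont.intervalIntegrable _ _)
        intro t ht
        exact hmono 0 t ht.1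
      rw [intervalIntegral.integral_const, smul_eq_mul, sub_zero] at h1
      have h2 : ∫ t in (0:ℝ)..(n:ℝ), f₀ t ≤ 1 := by
        rw [intervalIntegral.integral_of_le (by positivity), ← hf_mass]
        exact setIntegral_le_integral hf_int (Filter.Eventually.of_forall hf_nonneg)
      linarith
    obtain ⟨n, hn'⟩ := exists_nat_gt (1 / f₀ 0)
    have h3 := hn n
    have h0 := hfpos 0
    rw [div_lt_iff₀ h0] at hn'
    linarith
  have hex_pos : ∃ x, 0 ≤ ψ₀ x := by
    by_contra hc
    push_neg at hc
    have hmono : ∀ x y : ℝ, x ≤ y → f₀ y ≤ f₀ x := by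
      intro x y hxy
      have h1 : ∫ t in x..y, ψ₀ t * f₀ t ≤ 0 := by
        rw [intervalIntegral.integral_of_le hxy]
        apply setIntegral_nonpos_of_ae_restrict
        rw [Filter.EventuallyLE, ae_restrict_iff' measurableSet_Ioc]
        filter_upwards with t _
        exact mul_nonpos_of_nonpos_of_nonneg (hc t).le (hf_nonneg t)
      have h2 := FTC1 x y hxy
      linarith
    have hn : ∀ n : ℕ, (n:ℝ) * f₀ 0 ≤ 1 := by
      intro n
      have h1 : ∫ t in (-(n:ℝ))..(0:ℝ), f₀ 0 ≤ ∫ t in (-(n:ℝ))..(0:ℝ), f₀ t := by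
        apply intervalIntegral.integral_mono_on (by simp [Nat.cast_nonneg])
          intervalIntegrable_const (hcont.intervalIntegrable _ _)
        intro t ht
        exact hmono t 0 ht.2
      rw [intervalIntegral.integral_const, smul_eq_mul, sub_neg_eq_add, zero_add] at h1
      have h2 : ∫ t in (-(n:ℝ))..(0:ℝ), f₀ t ≤ 1 := by
        rw [intervalIntegral.integral_of_le (by simp [Nat.cast_nonneg]), ← hf_mass]
        exact setIntegral_le_integral hf_int (Filter.Eventually.of_forall hf_nonneg)
      linarith
    obtain ⟨n, hn'⟩ := exists_nat_gt (1 / f₀ 0)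
    have h3 := hn n
    have h0 := hfpos 0
    rw [div_lt_iff₀ h0] at hn'
    linarith
  -- the crossing point m
  obtain ⟨y₁, hy₁⟩ := hex_neg
  set A := {x : ℝ | 0 ≤ ψ₀ x} with hA
  have hAne : A.Nonempty := hex_pos
  have hAbdd : BddAbove A := by
    refine ⟨y₁, fun z hz => ?_⟩
    by_contra hzy
    push_neg at hzy
    have := hanti hzy.le
    have hz' : 0 ≤ ψ₀ z := hz
    linarith
  set m := sSup A with hm
  have hmgt : ∀ x, x < m → 0 ≤ ψ₀ x := by
    intro x hx
    obtain ⟨z, hzA, hxz⟩ := exists_lt_of_lt_csSup hAne hx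
    exact le_trans hzA (hanti hxz.le)
  have hmlt : ∀ x, m < x → ψ₀ x < 0 := by
    intro x hx
    by_contra hcc
    push_neg at hcc
    have hxA : x ∈ A := hcc
    have := le_csSup hAbdd hxA
    linarith
  -- the step size d
  set d := (L ^ (1/β : ℝ))⁻¹ with hd_def
  have hd : 0 < d := by
    rw [hd_def]
    exact inv_pos.2 (Real.rpow_pos_of_pos hL _)
  have hd1 : d = L ^ (-(1/β) : ℝ) := by
    rw [hd_def, ← Real.rpow_neg hL.le]
  have hβne : β ≠ 0 := ne_of_gt hβ0
  have hkey0 : L * d ^ (β-1) = L ^ (1/β : ℝ) := by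
    rw [hd1, ← Real.rpow_mul hL.le]
    nth_rewrite 1 [← Real.rpow_one L]
    rw [← Real.rpow_add hL]
    congr 1
    field_simp
    ring
  have hdinv : (1:ℝ)/d = L ^ (1/β : ℝ) := by
    rw [hd_def]
    field_simp
  have hkey : L * d ^ (β-1) = 1/d := by rw [hkey0, hdinv]
  have hX : (L ^ (1/β:ℝ))^(2:ℕ) = L ^ (2/β : ℝ) := by
    rw [← Real.rpow_natCast (L ^ (1/β:ℝ)) 2, ← Real.rpow_mul hL.le]
    congr 1
    push_cast
    ring
  have hsq : 1/d^2 = L ^ (2/β : ℝ) := by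
    rw [hd_def, ← hX]
    field_simp
  -- score bounds around m
  have hrpow_cont : ∀ c : ℝ, Continuous (fun t : ℝ => L * (c - t) ^ (β-1)) := by
    intro c
    rw [continuous_iff_continuousAt]
    intro t
    exact continuousAt_const.mul ((Real.continuousAt_rpow_const _ _ (Or.inr hβ1')).comp
      (continuousAt_const.sub continuousAt_id))
  have hrpow_cont' : ∀ c : ℝ, Continuous (fun t : ℝ => L * (t - c) ^ (β-1)) := by
    intro c
    rw [continuous_iff_continuousAt]
    intro t
    exact continuousAt_const.mul ((Real.continuousAt_rpow_const _ _ (Or.inr hβ1')).comp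
      (continuousAt_id.sub continuousAt_const))
  have s1 : ∀ x, m ≤ x → -ψ₀ x ≤ L * (x - m) ^ (β-1) := by
    intro x hx
    have hev : ∀ᶠ y in 𝓝[<] m, -ψ₀ x ≤ L * (x - y) ^ (β-1) := by
      filter_upwards [self_mem_nhdsWithin] with y hy
      have h1 : 0 ≤ ψ₀ y := hmgt y hy
      have h2 := hholder y x
      have h3 : ψ₀ y - ψ₀ x ≤ L * |y - x| ^ (β-1) := le_trans (le_abs_self _) h2
      have h4 : |y - x| = x - y := by
        rw [abs_sub_comm, abs_of_nonneg (by simp only [mem_Iio] at hy; linarith)]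
      rw [h4] at h3
      linarith
    have hT : Tendsto (fun y => L * (x - y) ^ (β-1)) (𝓝[<] m) (𝓝 (L * (x - m)^(β-1))) :=
      ((hrpow_cont x).tendsto m).mono_left nhdsWithin_le_nhds
    exact ge_of_tendsto hT hev
  have s2 : ∀ x, x ≤ m → ψ₀ x ≤ L * (m - x) ^ (β-1) := by
    intro x hx
    have hev : ∀ᶠ y in 𝓝[>] m, ψ₀ x ≤ L * (y - x) ^ (β-1) := by
      filter_upwards [self_mem_nhdsWithin] with y hy
      simp only [mem_Ioi] at hy
      have h1 : ψ₀ y < 0 := hmlt y hy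
      have h2 := hholder x y
      have h3 : ψ₀ x - ψ₀ y ≤ L * |x - y| ^ (β-1) := le_trans (le_abs_self _) h2
      have h4 : |x - y| = y - x := by
        rw [abs_sub_comm, abs_of_nonneg (by linarith)]
      rw [h4] at h3
      linarith
    have hT : Tendsto (fun y => L * (y - x) ^ (β-1)) (𝓝[>] m) (𝓝 (L * (m - x)^(β-1))) :=
      ((hrpow_cont' x).tendsto m).mono_left nhdsWithin_le_nhds
    exact ge_of_tendsto hT hev
  -- rpow antiderivatives
  have hrpow_int : ∀ x y : ℝ, x ≤ y →
      ∫ t in x..y, L * (t - x) ^ (β-1) = L/β * (y-x)^β := by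
    intro x y hxy
    have hderiv : ∀ t : ℝ, HasDerivAt (fun t => L/β * (t - x)^β) (L * (t-x)^(β-1)) t := by
      intro t
      have h1 : HasDerivAt (fun t : ℝ => t - x) 1 t := (hasDerivAt_id t).sub_const x
      have h2 : HasDerivAt (fun u : ℝ => u ^ β) (β * (t-x)^(β-1)) (t - x) :=
        Real.hasDerivAt_rpow_const (Or.inr hβ1)
      have h3 := (h2.comp t h1).const_mul (L/β)
      refine h3.congr_deriv ?_
      have hb : β * β⁻¹ = 1 := mul_inv_cancel₀ hβne
      linear_combination (L * (t-x)^(β-1)) * hb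
    have h4 := intervalIntegral.integral_eq_sub_of_hasDerivAt
      (f := fun t => L/β * (t - x)^β) (f' := fun t => L * (t-x)^(β-1))
      (fun t _ => hderiv t) ((hrpow_cont' x).intervalIntegrable x y)
    rw [h4]
    simp only [sub_self, Real.zero_rpow hβne]
    ring
  have hrpow_int2 : ∀ x y : ℝ, x ≤ y →
      ∫ t in x..y, L * (y - t) ^ (β-1) = L/β * (y-x)^β := by
    intro x y hxy
    have hderiv : ∀ t : ℝ, HasDerivAt (fun t => -(L/β) * (y - t)^β) (L * (y-t)^(β-1)) t := by
      intro t
      have h1 : HasDerivAt (fun t : ℝ => y - t) (-1) t := (hasDerivAt_id t).neg.const_add y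
      have h2 : HasDerivAt (fun u : ℝ => u ^ β) (β * (y-t)^(β-1)) (y - t) :=
        Real.hasDerivAt_rpow_const (Or.inr hβ1)
      have h3 := (h2.comp t h1).const_mul (-(L/β))
      refine h3.congr_deriv ?_
      have hb : β * β⁻¹ = 1 := mul_inv_cancel₀ hβne
      linear_combination (L * (y-t)^(β-1)) * hb
    have h4 := intervalIntegral.integral_eq_sub_of_hasDerivAt
      (f := fun t => -(L/β) * (y - t)^β) (f' := fun t => L * (y-t)^(β-1))
      (fun t _ => hderiv t) ((hrpow_cont y).intervalIntegrable x y)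
    rw [h4]
    simp only [sub_self, Real.zero_rpow hβne]
    ring
  -- bound L/β * d^β ≤ 1
  have hdβ : L/β * d^β ≤ 1 := by
    have e : L * d ^ β = 1 := by
      have h7 : d ^ β = d ^ (1 + (β-1) : ℝ) := by ring_nf
      rw [h7, Real.rpow_add hd, Real.rpow_one]
      rw [show L * (d * d^(β-1)) = d * (L * d^(β-1)) by ring, hkey]
      field_simp
    have hβinv : 1/β ≤ 1 := by
      rw [div_le_one hβ0]; linarith
    calc L/β * d^β = (1/β) * (L * d^β) := by ring
    _ = 1/β := by rw [e]; ring
    _ ≤ 1 := hβinv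
  -- lower bound for f₀ near m
  have hlow : ∀ x ∈ Icc (m - d) (m + d), f₀ m / Real.exp 1 ≤ f₀ x := by
    intro x hx
    have key : Real.log (f₀ m) - 1 ≤ Real.log (f₀ x) := by
      rcases le_total x m with hxm | hmx
      · have h1 : ∫ t in x..m, ψ₀ t ≤ ∫ t in x..m, L * (m - t)^(β-1) := by
          apply intervalIntegral.integral_mono_on hxm (hψ_ii _ _)
            ((hrpow_cont m).intervalIntegrable _ _)
          intro t ht
          exact s2 t ht.2
        rw [FTClog x m hxm, hrpow_int2 x m hxm] at h1
        have h2 : (m - x) ^ β ≤ d ^ β :=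
          Real.rpow_le_rpow (by linarith [hx.1]) (by linarith [hx.1]) hβ0.le
        have h3 : L/β * (m-x)^β ≤ L/β * d^β :=
          mul_le_mul_of_nonneg_left h2 (by positivity)
        linarith
      · have h1 : ∫ t in m..x, (-L) * (t - m)^(β-1) ≤ ∫ t in m..x, ψ₀ t := by
          apply intervalIntegral.integral_mono_on hmx ?_ (hψ_ii _ _)
          · intro t ht
            have := s1 t ht.1
            linarith [this]
          · have : (fun t : ℝ => (-L) * (t - m)^(β-1)) = fun t => -(L * (t - m)^(β-1)) := by
              funext t; ring
            rw [this]
            exact ((hrpow_cont' m).intervalIntegrable _ _).neg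
        have h5 : ∫ t in m..x, (-L) * (t - m)^(β-1) = -(L/β * (x-m)^β) := by
          have : (fun t : ℝ => (-L) * (t - m)^(β-1)) = fun t => -(L * (t - m)^(β-1)) := by
            funext t; ring
          rw [this, intervalIntegral.integral_neg, hrpow_int m x hmx]
        rw [FTClog m x hmx, h5] at h1
        have h2 : (x - m) ^ β ≤ d ^ β :=
          Real.rpow_le_rpow (by linarith [hx.2]) (by linarith [hx.2]) hβ0.le
        have h3 : L/β * (x-m)^β ≤ L/β * d^β :=
          mul_le_mul_of_nonneg_left h2 (by positivity)
        linarith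
    calc f₀ m / Real.exp 1 = Real.exp (Real.log (f₀ m) - 1) := by
          rw [Real.exp_sub, Real.exp_log (hfpos m)]
    _ ≤ Real.exp (Real.log (f₀ x)) := Real.exp_le_exp.2 key
    _ = f₀ x := Real.exp_log (hfpos x)
  -- f₀ m is small
  have hfm : f₀ m ≤ Real.exp 1 / (2*d) := by
    have h1 : ∫ _x in Icc (m-d) (m+d), (f₀ m / Real.exp 1) ≤ ∫ x in Icc (m-d) (m+d), f₀ x := by
      apply setIntegral_mono_on ?_ hf_int.integrableOn measurableSet_Icc hlow
      exact integrableOn_const (by rw [Real.volume_Icc]; exact ENNReal.ofReal_ne_top)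
    rw [setIntegral_const, smul_eq_mul] at h1
    have h3 : volume.real (Icc (m-d) (m+d)) = 2*d := by
      rw [measureReal_def, Real.volume_Icc, ENNReal.toReal_ofReal (by linarith)]
      ring
    rw [h3] at h1
    have h2 : ∫ x in Icc (m-d) (m+d), f₀ x ≤ 1 := by
      rw [← hf_mass]
      exact setIntegral_le_integral hf_int (Filter.Eventually.of_forall hf_nonneg)
    have he := Real.exp_pos 1
    rw [le_div_iff₀ (by positivity)]
    have h4 : 2*d * (f₀ m / Real.exp 1) ≤ 1 := by linarith
    calc f₀ m * (2*d) = (2*d*(f₀ m / Real.exp 1)) * Real.exp 1 := by field_simp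
    _ ≤ 1 * Real.exp 1 := mul_le_mul_of_nonneg_right h4 he.le
    _ = Real.exp 1 := one_mul _
  -- Hölder increments over step d
  have hinc' : ∀ x : ℝ, ψ₀ x - ψ₀ (x + d) ≤ 1 / d := by
    intro x
    have h1 := hholder x (x+d)
    have h2 : |x - (x+d)| = d := by
      rw [show x - (x+d) = -d by ring, abs_neg, abs_of_pos hd]
    rw [h2, hkey] at h1
    exact le_trans (le_abs_self _) h1
  have hψmd : -(1/d) ≤ ψ₀ (m + d) := by
    have h1 := s1 (m+d) (by linarith)
    rw [show m + d - m = d by ring, hkey] at h1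
    linarith
  have hIright : IntegrableOn (fun x => (ψ₀ x)^2 * f₀ x) (Ioi m) volume := hInt.integrableOn
  have hR := fisher_right_side d m hd f₀ ψ₀ hfpos hcont hf_int hanti FTC1
    (fun x hx => (hmlt x hx).le) hinc' hψmd hfm hIright
  -- the reflected data for the left side
  have hL2 : ∫ x in Iic m, (ψ₀ x)^2 * f₀ x ≤
      Real.exp 1 / (2*d^2) + (1/d^2) * ∫ x in Iic m, f₀ x := by
    set g : ℝ → ℝ := fun x => f₀ (-x) with hg
    set χ : ℝ → ℝ := fun x => -ψ₀ (-x) with hχ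
    have hgpos : ∀ x, 0 < g x := fun x => hfpos _
    have hgc : Continuous g := hcont.comp continuous_neg
    have hgi : Integrable g volume := by
      have h0 := ((Measure.measurePreserving_neg (volume : Measure ℝ)).integrable_comp_emb
        measurableEmbedding_neg (g := f₀)).2 hf_int
      simpa [Function.comp_def] using h0
    have hganti : Antitone χ := fun x y hxy => by
      simp only [hχ]
      exact neg_le_neg (hanti (neg_le_neg hxy))
    have hgftc : ∀ x y : ℝ, x ≤ y → ∫ t in x..y, χ t * g t = g y - g x := by
      intro x y hxy
      have h1 : (fun t => χ t * g t) = fun t => (fun s => -(ψ₀ s * f₀ s)) (-t) := by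
        funext t
        simp only [hχ, hg]
        ring
      rw [h1, intervalIntegral.integral_comp_neg (fun s => -(ψ₀ s * f₀ s)),
        intervalIntegral.integral_neg, FTC1 (-y) (-x) (by linarith)]
      simp only [hg]
      ring
    have hgneg : ∀ x, -m < x → χ x ≤ 0 := by
      intro x hx
      simp only [hχ, neg_nonpos]
      exact hmgt (-x) (by linarith)
    have hginc : ∀ x : ℝ, χ x - χ (x + d) ≤ 1 / d := by
      intro x
      have h1 := hholder (-(x+d)) (-x)
      have h2 : |(-(x+d)) - (-x)| = d := by
        rw [show (-(x+d)) - (-x) = -d by ring, abs_neg, abs_of_pos hd]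
      rw [h2, hkey] at h1
      have h3 := le_trans (le_abs_self _) h1
      simp only [hχ]
      linarith
    have hgψmd : -(1/d) ≤ χ (-m + d) := by
      have h1 := s2 (m - d) (by linarith)
      rw [show m - (m - d) = d by ring, hkey] at h1
      simp only [hχ]
      rw [show (-(-m + d) : ℝ) = m - d by ring]
      linarith
    have hgm : g (-m) ≤ Real.exp 1 / (2*d) := by
      simp only [hg, neg_neg]
      exact hfm
    have hgI : IntegrableOn (fun x => (χ x)^2 * g x) (Ioi (-m)) volume := by
      have h1 : IntegrableOn (fun x => (ψ₀ x)^2 * f₀ x) (Iio m) volume := hInt.integrableOn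
      have h2 := (MeasurePreserving.integrableOn_comp_preimage
        (Measure.measurePreserving_neg (volume : Measure ℝ))
        measurableEmbedding_neg
        (f := fun x => (ψ₀ x)^2 * f₀ x) (s := Iio m)).2 h1
      have h3 : (Neg.neg : ℝ → ℝ) ⁻¹' (Iio m) = Ioi (-m) := by
        ext z
        simp only [Set.mem_preimage, Set.mem_Iio, Set.mem_Ioi]
        constructor <;> intro <;> linarith
      rw [h3] at h2
      apply h2.congr_fun ?_ measurableSet_Ioi
      intro x _
      simp only [Function.comp, hχ, hg]
      ring
    have hRef := fisher_right_side d (-m) hd g χ hgpos hgc hgi hganti hgftc hgneg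
      hginc hgψmd hgm hgI
    have e1 : ∫ x in Ioi (-m), (χ x)^2 * g x = ∫ x in Iic m, (ψ₀ x)^2 * f₀ x := by
      have h1 : (fun x => (χ x)^2 * g x) = fun x => (fun s => (ψ₀ s)^2 * f₀ s) (-x) := by
        funext x
        simp only [hχ, hg]
        ring
      rw [h1]
      have h2 := integral_comp_neg_Ioi (-m) (fun s => (ψ₀ s)^2 * f₀ s)
      rw [neg_neg] at h2
      simpa using h2
    have e2 : ∫ x in Ioi (-m), g x = ∫ x in Iic m, f₀ x := by
      have h2 := integral_comp_neg_Ioi (-m) f₀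
      rw [neg_neg] at h2
      simpa [hg] using h2
    rw [e1, e2] at hRef
    exact hRef
  -- combine the two halves
  have hsplitI : ∫ x, (ψ₀ x)^2 * f₀ x
      = (∫ x in Iic m, (ψ₀ x)^2 * f₀ x) + ∫ x in Ioi m, (ψ₀ x)^2 * f₀ x :=
    (intervalIntegral.integral_Iic_add_Ioi hInt.integrableOn hInt.integrableOn).symm
  have hsplitF : (∫ x in Iic m, f₀ x) + ∫ x in Ioi m, f₀ x = 1 := by
    rw [intervalIntegral.integral_Iic_add_Ioi hf_int.integrableOn hf_int.integrableOn, hf_mass]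
  have hfin : ∫ x, (ψ₀ x)^2 * f₀ x ≤ (Real.exp 1 + 1) * (1/d^2) := by
    rw [hsplitI]
    have hc1 : (1/d^2) * (∫ x in Iic m, f₀ x) + (1/d^2) * ∫ x in Ioi m, f₀ x
        = 1/d^2 := by
      rw [← mul_add, hsplitF, mul_one]
    have hc2 : Real.exp 1/(2*d^2) + Real.exp 1/(2*d^2) = Real.exp 1 * (1/d^2) := by
      ring
    have hc3 : (Real.exp 1 + 1) * (1/d^2) = Real.exp 1 * (1/d^2) + 1/d^2 := by
      ring
    linarith
  rw [hsq] at hfin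
  have hLpos : (0:ℝ) < L ^ ((2:ℝ)/β) := Real.rpow_pos_of_pos hL _
  have hfinal : (Real.exp 1 + 1) * L^((2:ℝ)/β) ≤ 8 * L^((2:ℝ)/β) := by
    apply mul_le_mul_of_nonneg_right ?_ hLpos.le
    linarith [Real.exp_one_lt_d9]
  linarith
end
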